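/- arXiv:2006.08272 — 8 statements merged into one kernel-verified Lean document; each statement's English description precedes it below -/
import Mathlib

section
/- Let X be a w×w matrix whose entries are w² distinct indeterminates (a generic symbolic matrix), and let Y = I_w ⊗ X (Kronecker product). If T and S are w²×w² matrices over F such that T·Y = Yᵀ·S (as matrices of linear forms), then T = 0 and S = 0. -/
open Matrix Kronecker

theorem stmt0 (F : Type*) [Field F] (w : ℕ) (hw : 2 ≤ w)
    (Xm : Matrix (Fin w) (Fin w) (MvPolynomial (Fin w × Fin w) F))
    (hX : ∀ i j, Xm i j = MvPolynomial.X (i, j))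
    (T S : Matrix (Fin w × Fin w) (Fin w × Fin w) F)
    (h : T.map MvPolynomial.C *
          ((1 : Matrix (Fin w) (Fin w) (MvPolynomial (Fin w × Fin w) F)) ⊗ₖ Xm) =
        ((1 : Matrix (Fin w) (Fin w) (MvPolynomial (Fin w × Fin w) F)) ⊗ₖ Xm)ᵀ *
          S.map MvPolynomial.C) :
    T = 0 ∧ S = 0 := by
  have key : ∀ (a b c d u v : Fin w),
      (if v = d then T (a,b) (c,u) else 0) = (if v = b then S (a,u) (c,d) else 0) := by
    intro a b c d u v
    have h1 := congrFun (congrFun h (a,b)) (c,d)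
    have h2 := congrArg (MvPolynomial.coeff (Finsupp.single (u,v) 1)) h1
    simp only [Matrix.mul_apply, Matrix.transpose_apply, Matrix.map_apply,
      Matrix.kroneckerMap_apply, hX, MvPolynomial.coeff_sum, Matrix.one_apply,
      ite_mul, one_mul, zero_mul, mul_ite, mul_one, mul_zero] at h2
    have hcomm : ∀ (j : Fin w × Fin w) (r : F),
        (MvPolynomial.X j * MvPolynomial.C r : MvPolynomial (Fin w × Fin w) F)
          = MvPolynomial.C r * MvPolynomial.X j := fun j r => mul_comm _ _
    simp only [hcomm, apply_ite (MvPolynomial.coeff (Finsupp.single (u,v) 1)),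
      MvPolynomial.coeff_zero, MvPolynomial.coeff_C_mul,
      MvPolynomial.coeff_X', Finsupp.single_eq_single_iff, Prod.mk.injEq,
      one_ne_zero, and_false, or_false, Fintype.sum_prod_type, and_true,
      mul_ite, mul_one, mul_zero, Finset.sum_ite_eq', Finset.mem_univ, if_true,
      Finset.sum_ite_irrel, Finset.sum_const_zero] at h2
    by_cases hd : d = v <;> by_cases hb : b = v <;>
      simp [hd, hb, Finset.sum_ite_eq', eq_comm, ne_comm] at h2 ⊢ <;>
      exact h2
  haveI : Nontrivial (Fin w) := Fin.nontrivial_iff_two_le.mpr hw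
  constructor
  · ext ⟨a, b⟩ ⟨c, u⟩
    obtain ⟨d, hd⟩ := exists_ne b
    have := key a b c d u d
    simpa [hd] using this
  · ext ⟨a, u⟩ ⟨c, d⟩
    obtain ⟨b, hb⟩ := exists_ne d
    have := key a b c d u b
    simpa [hb] using this.symm
end

section
/- Let X be a w×w matrix whose entries are w² distinct indeterminates, and let Y = I_w ⊗ X. If T, S are w²×w² matrices over F with T·Y = Y·S, then T = S and there exists a w×w matrix M over F such that T = M ⊗ I_w. -/
open Matrix Kronecker

theorem stmt1 (F : Type*) [Field F] (w : ℕ)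
    (Xm : Matrix (Fin w) (Fin w) (MvPolynomial (Fin w × Fin w) F))
    (hX : ∀ i j, Xm i j = MvPolynomial.X (i, j))
    (T S : Matrix (Fin w × Fin w) (Fin w × Fin w) F)
    (h : T.map MvPolynomial.C *
          ((1 : Matrix (Fin w) (Fin w) (MvPolynomial (Fin w × Fin w) F)) ⊗ₖ Xm) =
        ((1 : Matrix (Fin w) (Fin w) (MvPolynomial (Fin w × Fin w) F)) ⊗ₖ Xm) *
          S.map MvPolynomial.C) :
    T = S ∧ ∃ M : Matrix (Fin w) (Fin w) F,
      T = M ⊗ₖ (1 : Matrix (Fin w) (Fin w) F) := by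
  have key : ∀ a i b j p q,
      (if j = q then T (a,i) (b,p) else 0) = (if i = p then S (a,q) (b,j) else 0) := by
    intro a i b j p q
    have h1 := congrFun (congrFun h (a,i)) (b,j)
    have h2 := congrArg (MvPolynomial.coeff (Finsupp.single (p,q) 1)) h1
    simp [Matrix.mul_apply, Matrix.kroneckerMap_apply, Matrix.map_apply, Matrix.one_apply,
      hX, Fintype.sum_prod_type, MvPolynomial.coeff_sum, apply_ite (MvPolynomial.coeff _),
      mul_comm (MvPolynomial.X _) (MvPolynomial.C _),
      MvPolynomial.coeff_C_mul, MvPolynomial.coeff_X', ite_and,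
      Finsupp.single_eq_single_iff, Prod.mk.injEq, Finset.sum_ite_eq, Finset.sum_ite_eq'] at h2
    exact h2
  rcases Nat.eq_zero_or_pos w with hw | hw
  · subst hw
    constructor
    · ext ⟨i, _⟩; exact i.elim0
    · exact ⟨0, by ext ⟨i, _⟩; exact i.elim0⟩
  · set i0 : Fin w := ⟨0, hw⟩
    set M : Matrix (Fin w) (Fin w) F := fun a b => T (a, i0) (b, i0) with hM
    -- S entries
    have hS : ∀ a q b j, S (a, q) (b, j) = if q = j then M a b else 0 := by
      intro a q b j
      have h1 := key a i0 b j i0 q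
      simp only [if_pos rfl, if_true] at h1
      by_cases hq : j = q
      · subst hq
        simp only [if_pos rfl, if_true] at h1
        simp [hM, ← h1]
      · rw [if_neg hq] at h1
        rw [if_neg (fun hh => hq hh.symm), ← h1]
    have hT : ∀ a i b p, T (a, i) (b, p) = if i = p then M a b else 0 := by
      intro a i b p
      have h1 := key a i b i0 p i0
      simp only [if_pos rfl, if_true] at h1
      rw [h1, hS]
      simp
    constructor
    · ext ⟨a, i⟩ ⟨b, j⟩
      rw [hT, hS]
    · refine ⟨M, ?_⟩
      ext ⟨a, i⟩ ⟨b, j⟩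
      rw [hT]
      by_cases hij : i = j <;> simp [Matrix.one_apply, hij]
end

section
/- Every matrix in the Lie algebra of the trace iterated matrix multiplication polynomial Tr-IMM_{w,d} is block-diagonal with respect to the partition of the n = w²d variables into the d groups x_0, ..., x_{d-1}: if E ∈ 𝔤_{Tr-IMM} and the row index of a nonzero entry of E corresponds to a variable in x_k while the column index corresponds to a variable in x_ℓ, then k = ℓ. -/
open Matrix MvPolynomial

/-- The `k`-th symbolic matrix `Q_k` of `Tr-IMM_{w,d}`: its `(i,j)` entry is the
variable `x^{(k)}_{i,j}`. -/
noncomputable def symQ (F : Type*) [Field F] (w d : ℕ) (k : Fin d) :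
    Matrix (Fin w) (Fin w) (MvPolynomial (Fin d × Fin w × Fin w) F) :=
  fun i j => MvPolynomial.X (k, i, j)

/-- The trace iterated matrix multiplication polynomial
`Tr-IMM_{w,d} = tr(Q_0 Q_1 ⋯ Q_{d-1})`. -/
noncomputable def trIMM (F : Type*) [Field F] (w d : ℕ) :
    MvPolynomial (Fin d × Fin w × Fin w) F :=
  Matrix.trace (((List.finRange d).map (symQ F w d)).prod)

/-- The Lie algebra of a polynomial `f`. -/
def lieAlg {F : Type*} [Field F] {σ : Type*} [Fintype σ] [DecidableEq σ]
    (f : MvPolynomial σ F) : Set (Matrix σ σ F) :=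
  {E | ∑ i : σ, ∑ j : σ, E i j • (MvPolynomial.X j * MvPolynomial.pderiv i f) = 0}

/-! ### Auxiliary material -/

def nodes {w : ℕ} (m : ℕ) (i : Fin w) (q : Fin m → Fin w) : Fin (m+1) → Fin w :=
  Fin.cons i q

@[simp] lemma nodes_zero {w m : ℕ} (i : Fin w) (q : Fin m → Fin w) : nodes m i q 0 = i := rfl
@[simp] lemma nodes_succ {w m : ℕ} (i : Fin w) (q : Fin m → Fin w) (t : Fin m) :
    nodes m i q t.succ = q t := by simp [nodes]

def consE (w m : ℕ) : (Fin w × (Fin m → Fin w)) ≃ (Fin (m+1) → Fin w) where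
  toFun p := nodes m p.1 p.2
  invFun q := (q 0, fun t => q t.succ)
  left_inv p := by ext <;> simp
  right_inv q := by funext t; exact congrFun (Fin.cons_self_tail q) t

lemma listProd_entry {R : Type*} [CommRing R] {w : ℕ} :
    ∀ (m : ℕ) (A : Fin m → Matrix (Fin w) (Fin w) R) (i j : Fin w),
    ((List.finRange m).map A).prod i j =
      ∑ q : Fin m → Fin w,
        if nodes m i q (Fin.last m) = j then
          ∏ t : Fin m, A t (nodes m i q t.castSucc) (q t) else 0 := by
  intro m
  induction m with
  | zero =>
    intro A i j
    simp [Matrix.one_apply, nodes, Finset.sum_ite_eq, eq_comm]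
  | succ m ih =>
    intro A i j
    rw [List.finRange_succ, List.map_cons, List.prod_cons, List.map_map, Matrix.mul_apply]
    have key : ∀ x, (((List.finRange m).map (A ∘ Fin.succ)).prod) x j =
        ∑ q : Fin m → Fin w,
          if nodes m x q (Fin.last m) = j then
            ∏ t : Fin m, A t.succ (nodes m x q t.castSucc) (q t) else 0 := fun x => ih _ x j
    simp only [key, Finset.mul_sum]
    rw [← Equiv.sum_comp (consE w m)
      (fun q => if nodes (m+1) i q (Fin.last (m+1)) = j then
          ∏ t : Fin (m+1), A t (nodes (m+1) i q t.castSucc) (q t) else 0)]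
    rw [Fintype.sum_prod_type]
    apply Finset.sum_congr rfl
    intro x _
    apply Finset.sum_congr rfl
    intro q _
    have hE : (consE w m) (x, q) = nodes m x q := rfl
    rw [hE]
    have hlast : nodes (m+1) i (nodes m x q) (Fin.last (m+1)) = nodes m x q (Fin.last m) := by
      rw [← Fin.succ_last, nodes_succ]
    rw [hlast, mul_ite, mul_zero]
    congr 1
    rw [Fin.prod_univ_succ]
    congr 1

lemma trIMM_eq (F : Type*) [Field F] (w m : ℕ) :
    trIMM F w (m+1) = ∑ p : Fin (m+1) → Fin w,
      ∏ t : Fin (m+1), (X (t, p t, p (t+1)) : MvPolynomial (Fin (m+1) × Fin w × Fin w) F) := by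
  rw [trIMM, Matrix.trace]
  simp only [Matrix.diag, listProd_entry (m+1) (symQ F w (m+1))]
  rw [Finset.sum_comm]
  have step1 : ∀ q : Fin (m+1) → Fin w,
      (∑ i : Fin w, if nodes (m+1) i q (Fin.last (m+1)) = i then
        ∏ t : Fin (m+1), symQ F w (m+1) t (nodes (m+1) i q t.castSucc) (q t) else 0)
      = ∏ t : Fin (m+1), symQ F w (m+1) t (nodes (m+1) (q (Fin.last m)) q t.castSucc) (q t) := by
    intro q
    have hc : ∀ i, nodes (m+1) i q (Fin.last (m+1)) = q (Fin.last m) := by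
      intro i; rw [← Fin.succ_last, nodes_succ]
    simp only [hc]
    rw [Finset.sum_ite_eq Finset.univ (q (Fin.last m))
      (fun i => ∏ t : Fin (m+1), symQ F w (m+1) t (nodes (m+1) i q t.castSucc) (q t))]
    simp
  simp only [step1]
  have bij : Function.Bijective (fun (p : Fin (m+1) → Fin w) (t : Fin (m+1)) => p (t + 1)) := by
    rw [Function.bijective_iff_has_inverse]
    refine ⟨fun q t => q (t - 1), fun p => ?_, fun q => ?_⟩ <;>
      · funext t; simp
  refine (Fintype.sum_bijective _ bij _ _ ?_).symm
  intro p
  have hq : (fun t : Fin (m+1) => p (t + 1)) (Fin.last m) = p 0 := by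
    simp [Fin.last_add_one]
  have hnode : ∀ t : Fin (m+1),
      nodes (m+1) (p 0) (fun s : Fin (m+1) => p (s + 1)) t.castSucc = p t := by
    intro t
    induction t using Fin.cases with
    | zero => simp
    | succ s =>
      rw [← Fin.succ_castSucc, nodes_succ]
      simp [Fin.coeSucc_eq_succ]
  apply Finset.prod_congr rfl
  intro t _
  rw [hq, hnode t]
  rfl

noncomputable def Dexp {w d : ℕ} [NeZero d] (p : Fin d → Fin w) : (Fin d × Fin w × Fin w) →₀ ℕ :=
  ∑ t : Fin d, Finsupp.single (t, p t, p (t + 1)) 1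

lemma Dexp_apply {w d : ℕ} [NeZero d] (p : Fin d → Fin w) (x : Fin d × Fin w × Fin w) :
    Dexp p x = if p x.1 = x.2.1 ∧ p (x.1 + 1) = x.2.2 then 1 else 0 := by
  obtain ⟨s, u, v⟩ := x
  rw [Dexp, Finsupp.finset_sum_apply]
  rw [Finset.sum_eq_single s]
  · simp [Finsupp.single_apply, Prod.ext_iff]
  · intro t _ hts
    exact Finsupp.single_eq_of_ne' (fun hc => hts (congrArg Prod.fst hc))
  · simp

lemma sing_layer_ne {w d : ℕ} {c x : Fin d × Fin w × Fin w} (h : c.1 ≠ x.1) :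
    Finsupp.single c (1:ℕ) x = 0 :=
  Finsupp.single_eq_of_ne' (fun hc => h (congrArg Prod.fst hc))

lemma layer_Dexp {w d : ℕ} [NeZero d] (p : Fin d → Fin w) (t : Fin d) :
    ∑ u : Fin w, ∑ v : Fin w, Dexp p (t, u, v) = 1 := by
  classical
  simp only [Dexp_apply, ite_and]
  have h : ∀ u : Fin w, (∑ v : Fin w, if p t = u then if p (t+1) = v then (1:ℕ) else 0 else 0)
      = if p t = u then 1 else 0 := by
    intro u
    split_ifs with h
    · simp [Finset.sum_ite_eq]
    · simp
  rw [Finset.sum_congr rfl (fun u _ => h u)]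
  simp [Finset.sum_ite_eq]

lemma layer_single {w d : ℕ} (c : Fin d × Fin w × Fin w) (t : Fin d) :
    ∑ u : Fin w, ∑ v : Fin w, (Finsupp.single c (1:ℕ)) (t, u, v) = if c.1 = t then 1 else 0 := by
  obtain ⟨s, c2, c3⟩ := c
  simp [Finsupp.single_apply, Prod.ext_iff, ite_and, Finset.sum_ite_eq]

lemma prod_X_eq_monomial {F : Type*} [Field F] {σ ι : Type*} [DecidableEq σ] (s : Finset ι) (g : ι → σ) :
    (∏ t ∈ s, (X (g t) : MvPolynomial σ F)) =
      monomial (∑ t ∈ s, Finsupp.single (g t) 1) 1 := by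
  classical
  induction s using Finset.induction with
  | empty => simp
  | insert _ _ hns ih =>
    rw [Finset.prod_insert hns, Finset.sum_insert hns, ih, X, monomial_mul, one_mul]

lemma ite_one_zero_eq_one {c : Prop} [Decidable c] (h : (if c then (1:ℕ) else 0) = 1) : c := by
  by_cases hc : c
  · exact hc
  · simp [hc] at h

lemma core (F : Type*) [Field F] [CharZero F] (w' m : ℕ)
    (E : Matrix (Fin (m+3) × Fin (w'+2) × Fin (w'+2)) (Fin (m+3) × Fin (w'+2) × Fin (w'+2)) F)
    (hE : E ∈ lieAlg (trIMM F (w'+2) (m+3)))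
    (k ℓ : Fin (m+3)) (pa qa pb qb : Fin (w'+2))
    (hkl : ℓ ≠ k)
    (istar : Fin (m+3) → Fin (w'+2))
    (hik : istar k = pa) (hik1 : istar (k+1) = qa)
    (hbne : ¬ (istar ℓ = pb ∧ istar (ℓ+1) = qb))
    (hcontra : ∀ p : Fin (m+3) → Fin (w'+2),
      (∀ t, t ≠ k → t ≠ ℓ → p t = istar t ∧ p (t+1) = istar (t+1)) →
      p ℓ = pb → p (ℓ+1) = qb → False) :
    E (k, pa, qa) (ℓ, pb, qb) = 0 := by
  classical
  have hDia : Dexp istar (k, pa, qa) = 1 := by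
    rw [Dexp_apply]
    simp [hik, hik1]
  have hDib : Dexp istar (ℓ, pb, qb) = 0 := by
    rw [Dexp_apply, if_neg]
    exact hbne
  have hf : trIMM F (w'+2) (m+3) =
      ∑ p : Fin (m+3) → Fin (w'+2), monomial (Dexp p) (1:F) := by
    refine (trIMM_eq F (w'+2) (m+2)).trans ?_
    refine Finset.sum_congr rfl fun p _ => ?_
    rw [prod_X_eq_monomial]
    rfl
  have hterm : ∀ a' b' : Fin (m+3) × Fin (w'+2) × Fin (w'+2),
      (X b') * pderiv a' (trIMM F (w'+2) (m+3)) =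
      ∑ p : Fin (m+3) → Fin (w'+2),
        monomial (Finsupp.single b' 1 + (Dexp p - Finsupp.single a' 1))
          (((Dexp p a' : ℕ)) : F) := by
    intro a' b'
    rw [hf, map_sum, Finset.mul_sum]
    refine Finset.sum_congr rfl fun p _ => ?_
    rw [pderiv_monomial, one_mul, ← pow_one (X b' : MvPolynomial _ F), ← monomial_single_add]
  have H0 := hE
  simp only [lieAlg, Set.mem_setOf_eq] at H0
  have H1 := congrArg (coeff (Finsupp.single (ℓ, pb, qb) 1 +
      (Dexp istar - Finsupp.single (k, pa, qa) 1))) H0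
  simp only [hterm, coeff_sum, coeff_smul, coeff_monomial, smul_eq_mul, coeff_zero] at H1
  -- the uniqueness lemma
  have uniq : ∀ (a' b' : Fin (m+3) × Fin (w'+2) × Fin (w'+2)) (p : Fin (m+3) → Fin (w'+2)),
      Finsupp.single b' 1 + (Dexp p - Finsupp.single a' 1) =
        Finsupp.single (ℓ, pb, qb) 1 + (Dexp istar - Finsupp.single (k, pa, qa) 1) →
      Dexp p a' ≠ 0 → a' = (k, pa, qa) ∧ b' = (ℓ, pb, qb) := by
    intro a' b' p heq hDpa'
    have h01 : ∀ x, Dexp p x = 0 ∨ Dexp p x = 1 := by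
      intro x; rw [Dexp_apply]; split <;> simp
    have hDpa1 : Dexp p a' = 1 := (h01 a').resolve_left hDpa'
    have hle1 : ∀ x, Finsupp.single a' (1:ℕ) x ≤ Dexp p x := by
      intro x
      by_cases hx : a' = x
      · subst hx; simp [Finsupp.single_apply, hDpa1]
      · rw [Finsupp.single_eq_of_ne' hx]; exact Nat.zero_le _
    have hle2 : ∀ x, Finsupp.single (k, pa, qa) (1:ℕ) x ≤ Dexp istar x := by
      intro x
      by_cases hx : ((k, pa, qa) : Fin (m+3) × Fin (w'+2) × Fin (w'+2)) = x
      · subst hx; simp [Finsupp.single_apply, hDia]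
      · rw [Finsupp.single_eq_of_ne' hx]; exact Nat.zero_le _
    have hpt : ∀ x, Finsupp.single b' 1 x + Dexp p x + Finsupp.single (k, pa, qa) 1 x
        = Finsupp.single (ℓ, pb, qb) 1 x + Dexp istar x + Finsupp.single a' 1 x := by
      intro x
      have h := DFunLike.congr_fun heq x
      simp only [Finsupp.add_apply, Finsupp.tsub_apply] at h
      have h1 := hle1 x
      have h2 := hle2 x
      omega
    have hlayer : ∀ t : Fin (m+3),
        (if b'.1 = t then 1 else 0) + 1 + (if k = t then 1 else 0)
        = (if ℓ = t then 1 else 0) + 1 + (if a'.1 = t then 1 else 0) := by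
      intro t
      have Hsum : (∑ u : Fin (w'+2), ∑ v : Fin (w'+2),
          (Finsupp.single b' 1 (t,u,v) + Dexp p (t,u,v) + Finsupp.single (k, pa, qa) 1 (t,u,v)))
          = ∑ u : Fin (w'+2), ∑ v : Fin (w'+2),
          (Finsupp.single (ℓ, pb, qb) 1 (t,u,v) + Dexp istar (t,u,v) + Finsupp.single a' 1 (t,u,v)) :=
        Finset.sum_congr rfl fun u _ => Finset.sum_congr rfl fun v _ => hpt (t,u,v)
      simp only [Finset.sum_add_distrib] at Hsum
      rw [layer_single, layer_single, layer_single, layer_single, layer_Dexp, layer_Dexp] at Hsum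
      simpa using Hsum
    have ha'1 : a'.1 = k := by
      by_cases hc : a'.1 = k
      · exact hc
      · exfalso
        have h := hlayer k
        rw [if_pos rfl, if_neg hkl, if_neg hc] at h
        split_ifs at h <;> omega
    have hb'1 : b'.1 = ℓ := by
      by_cases hc : b'.1 = ℓ
      · exact hc
      · exfalso
        have h := hlayer ℓ
        rw [if_pos rfl, if_neg hc, if_neg (fun hh : k = ℓ => hkl hh.symm)] at h
        split_ifs at h <;> omega
    have ha'eq : a' = (k, p k, p (k+1)) := by
      have h := hDpa1
      rw [Dexp_apply] at h
      have hc := ite_one_zero_eq_one h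
      refine Prod.ext_iff.mpr ⟨ha'1, Prod.ext_iff.mpr ⟨?_, ?_⟩⟩
      · rw [← hc.1, ha'1]
      · rw [← hc.2, ha'1]
    -- pairs agree away from layers k, ℓ
    have hpair : ∀ t : Fin (m+3), t ≠ k → t ≠ ℓ →
        p t = istar t ∧ p (t+1) = istar (t+1) := by
      intro t htk htl
      have h := hpt (t, istar t, istar (t+1))
      rw [sing_layer_ne (c := b') (x := (t, istar t, istar (t+1)))
            (by rw [hb'1]; exact fun hh => htl hh.symm),
          sing_layer_ne (c := ((k, pa, qa) : Fin (m+3) × Fin (w'+2) × Fin (w'+2)))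
            (x := (t, istar t, istar (t+1))) (fun hh => htk hh.symm),
          sing_layer_ne (c := ((ℓ, pb, qb) : Fin (m+3) × Fin (w'+2) × Fin (w'+2)))
            (x := (t, istar t, istar (t+1))) (fun hh => htl hh.symm),
          sing_layer_ne (c := a') (x := (t, istar t, istar (t+1)))
            (by rw [ha'1]; exact fun hh => htk hh.symm)] at h
      have hDi : Dexp istar (t, istar t, istar (t+1)) = 1 := by
        rw [Dexp_apply]; simp
      rw [hDi] at h
      have hDp : Dexp p (t, istar t, istar (t+1)) = 1 := by omega
      rw [Dexp_apply] at hDp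
      exact ite_one_zero_eq_one hDp
    -- layer ℓ analysis
    have hL := hpt (ℓ, pb, qb)
    rw [sing_layer_ne (c := ((k, pa, qa) : Fin (m+3) × Fin (w'+2) × Fin (w'+2)))
        (x := ((ℓ, pb, qb) : Fin (m+3) × Fin (w'+2) × Fin (w'+2)))
        (fun hh => hkl hh.symm),
        sing_layer_ne (c := a')
        (x := ((ℓ, pb, qb) : Fin (m+3) × Fin (w'+2) × Fin (w'+2)))
        (by rw [ha'1]; exact fun hh => hkl hh.symm),
        hDib] at hL
    rw [Finsupp.single_apply, Finsupp.single_apply, if_pos rfl] at hL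
    by_cases hbb : b' = ((ℓ, pb, qb) : Fin (m+3) × Fin (w'+2) × Fin (w'+2))
    · -- b' = b : show also a' = a
      rw [if_pos hbb] at hL
      have hDpb : Dexp p (ℓ, pb, qb) = 0 := by omega
      have hx0 := hpt (ℓ, istar ℓ, istar (ℓ+1))
      have hne0 : ((ℓ, pb, qb) : Fin (m+3) × Fin (w'+2) × Fin (w'+2)) ≠ (ℓ, istar ℓ, istar (ℓ+1)) := by
        intro hh
        apply hbne
        have h1 := congrArg (fun z : Fin (m+3) × Fin (w'+2) × Fin (w'+2) => z.2.1) hh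
        have h2 := congrArg (fun z : Fin (m+3) × Fin (w'+2) × Fin (w'+2) => z.2.2) hh
        exact ⟨h1.symm, h2.symm⟩
      rw [sing_layer_ne (c := ((k, pa, qa) : Fin (m+3) × Fin (w'+2) × Fin (w'+2)))
          (x := ((ℓ, istar ℓ, istar (ℓ+1)) : Fin (m+3) × Fin (w'+2) × Fin (w'+2)))
          (fun hh => hkl hh.symm),
          sing_layer_ne (c := a')
          (x := ((ℓ, istar ℓ, istar (ℓ+1)) : Fin (m+3) × Fin (w'+2) × Fin (w'+2)))
          (by rw [ha'1]; exact fun hh => hkl hh.symm)] at hx0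
      rw [Finsupp.single_apply, Finsupp.single_apply,
        if_neg (show ¬ b' = ((ℓ, istar ℓ, istar (ℓ+1)) : Fin (m+3) × Fin (w'+2) × Fin (w'+2))
          from fun hh => hne0 (hbb.symm.trans hh)),
        if_neg hne0] at hx0
      have hDi0 : Dexp istar (ℓ, istar ℓ, istar (ℓ+1)) = 1 := by
        rw [Dexp_apply]; simp
      rw [hDi0] at hx0
      have hDp0 : Dexp p (ℓ, istar ℓ, istar (ℓ+1)) = 1 := by omega
      rw [Dexp_apply] at hDp0
      have hpairl : p ℓ = istar ℓ ∧ p (ℓ+1) = istar (ℓ+1) :=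
        ite_one_zero_eq_one hDp0
      have hpairall : ∀ t : Fin (m+3), t ≠ k →
          p t = istar t ∧ p (t+1) = istar (t+1) := by
        intro t htk
        by_cases htl : t = ℓ
        · subst htl; exact hpairl
        · exact hpair t htk htl
      have hpk : p k = istar k := by
        have h1 := (hpairall (k-1) (by simp)).2
        rwa [sub_add_cancel] at h1
      have hpk1 : p (k+1) = istar (k+1) := (hpairall (k+1) (by simp)).1
      constructor
      · rw [ha'eq, hpk, hpk1, hik, hik1]
      · exact hbb
    · exfalso
      rw [if_neg hbb] at hL
      have hDpb : Dexp p (ℓ, pb, qb) = 1 := by omega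
      rw [Dexp_apply] at hDpb
      have hc := ite_one_zero_eq_one hDpb
      exact hcontra p hpair hc.1 hc.2
  -- reduce the double sum
  have hS0 : ∀ a' b' : Fin (m+3) × Fin (w'+2) × Fin (w'+2), ¬ (a' = (k, pa, qa) ∧ b' = (ℓ, pb, qb)) →
      (∑ p : Fin (m+3) → Fin (w'+2),
        if Finsupp.single b' 1 + (Dexp p - Finsupp.single a' 1) =
            Finsupp.single (ℓ, pb, qb) 1 + (Dexp istar - Finsupp.single (k, pa, qa) 1)
        then ((Dexp p a' : ℕ) : F) else 0) = 0 := by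
    intro a' b' hne'
    apply Finset.sum_eq_zero
    intro p _
    by_cases h1 : Finsupp.single b' 1 + (Dexp p - Finsupp.single a' 1) =
        Finsupp.single (ℓ, pb, qb) 1 + (Dexp istar - Finsupp.single (k, pa, qa) 1)
    · rw [if_pos h1]
      by_cases h2 : Dexp p a' = 0
      · simp [h2]
      · exact absurd (uniq a' b' p h1 h2) hne'
    · rw [if_neg h1]
  rw [Finset.sum_eq_single ((k, pa, qa) : Fin (m+3) × Fin (w'+2) × Fin (w'+2))] at H1
  rotate_left
  · intro a' _ ha'
    apply Finset.sum_eq_zero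
    intro b' _
    rw [hS0 a' b' (fun hh => ha' hh.1), mul_zero]
  · simp
  rw [Finset.sum_eq_single ((ℓ, pb, qb) : Fin (m+3) × Fin (w'+2) × Fin (w'+2))] at H1
  rotate_left
  · intro b' _ hb'
    rw [hS0 _ b' (fun hh => hb' hh.2), mul_zero]
  · simp
  -- the remaining coefficient is nonzero
  have hcast : (∑ p : Fin (m+3) → Fin (w'+2),
      if Finsupp.single ((ℓ, pb, qb) : Fin (m+3) × Fin (w'+2) × Fin (w'+2)) 1 +
          (Dexp p - Finsupp.single (k, pa, qa) 1) =
          Finsupp.single (ℓ, pb, qb) 1 + (Dexp istar - Finsupp.single (k, pa, qa) 1)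
      then ((Dexp p (k, pa, qa) : ℕ) : F) else 0)
      = ((∑ p : Fin (m+3) → Fin (w'+2),
        if Finsupp.single ((ℓ, pb, qb) : Fin (m+3) × Fin (w'+2) × Fin (w'+2)) 1 +
            (Dexp p - Finsupp.single (k, pa, qa) 1) =
            Finsupp.single (ℓ, pb, qb) 1 + (Dexp istar - Finsupp.single (k, pa, qa) 1)
        then Dexp p (k, pa, qa) else 0 : ℕ) : F) := by
    rw [Nat.cast_sum]
    refine Finset.sum_congr rfl fun p _ => ?_
    split_ifs <;> simp
  rw [hcast] at H1
  have hpos : (1:ℕ) ≤ ∑ p : Fin (m+3) → Fin (w'+2),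
      if Finsupp.single ((ℓ, pb, qb) : Fin (m+3) × Fin (w'+2) × Fin (w'+2)) 1 +
          (Dexp p - Finsupp.single (k, pa, qa) 1) =
          Finsupp.single (ℓ, pb, qb) 1 + (Dexp istar - Finsupp.single (k, pa, qa) 1)
      then Dexp p (k, pa, qa) else 0 := by
    have hterm1 : (if Finsupp.single ((ℓ, pb, qb) : Fin (m+3) × Fin (w'+2) × Fin (w'+2)) 1 +
          (Dexp istar - Finsupp.single (k, pa, qa) 1) =
          Finsupp.single (ℓ, pb, qb) 1 + (Dexp istar - Finsupp.single (k, pa, qa) 1)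
        then Dexp istar (k, pa, qa) else 0) = 1 := by
      rw [if_pos rfl, hDia]
    have hb := Finset.single_le_sum
      (f := fun p : Fin (m+3) → Fin (w'+2) =>
        if Finsupp.single ((ℓ, pb, qb) : Fin (m+3) × Fin (w'+2) × Fin (w'+2)) 1 +
            (Dexp p - Finsupp.single (k, pa, qa) 1) =
            Finsupp.single (ℓ, pb, qb) 1 + (Dexp istar - Finsupp.single (k, pa, qa) 1)
        then Dexp p (k, pa, qa) else 0)
      (fun i _ => Nat.zero_le _) (Finset.mem_univ istar)
    simpa [hDia] using hb
  rcases mul_eq_zero.mp H1 with h | h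
  · exact h
  · exfalso
    have := Nat.cast_eq_zero.mp h
    omega

theorem stmt6 (F : Type*) [Field F] [CharZero F] (w d : ℕ) (hw : 2 ≤ w) (hd : 3 ≤ d)
    (E : Matrix (Fin d × Fin w × Fin w) (Fin d × Fin w × Fin w) F)
    (hE : E ∈ lieAlg (trIMM F w d)) :
    ∀ a b : Fin d × Fin w × Fin w, E a b ≠ 0 → a.1 = b.1 := by
  intro a b hab
  by_contra hne
  obtain ⟨m, rfl⟩ : ∃ m, d = m + 3 := ⟨d - 3, by omega⟩
  obtain ⟨w', rfl⟩ : ∃ w', w = w' + 2 := ⟨w - 2, by omega⟩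
  obtain ⟨k, pa, qa⟩ := a
  obtain ⟨ℓ, pb, qb⟩ := b
  simp only at hne
  apply hab
  have hlk : ℓ ≠ k := fun h => hne h.symm
  set other : Fin (w'+2) → Fin (w'+2) := fun x => if x = 0 then 1 else 0 with hother
  have hothers : ∀ x, other x ≠ x := by
    intro x
    simp only [hother]
    split_ifs with h
    · rw [h]; exact one_ne_zero
    · exact Ne.symm h
  have hk1k : k + 1 ≠ k := by simp
  have hk11k : k + 1 + 1 ≠ k := by
    have h2 : ((1 : Fin (m+3)) + 1) ≠ 0 := by
      have hval : ((1 : Fin (m+3)) + 1).val = 2 := by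
        simp [Fin.val_add, Fin.val_one, Nat.mod_eq_of_lt (by omega : 1 + 1 < m + 3)]
      intro h; rw [h] at hval; simp at hval
    intro h
    rw [add_assoc] at h
    exact h2 (add_left_cancel (h.trans (add_zero k).symm))
  have hk11k1 : k + 1 + 1 ≠ k + 1 := by simp
  by_cases hcase : ℓ = k + 1
  · subst hcase
    apply core F w' m E hE k (k+1) pa qa pb qb hlk
      (fun t => if t = k then pa else if t = k+1 then qa else if t = k+1+1 then other qb else 0)
    · rw [if_pos rfl]
    · rw [if_neg hk1k, if_pos rfl]
    · intro hh
      have h2 := hh.2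
      rw [if_neg hk11k, if_neg hk11k1, if_pos rfl] at h2
      exact hothers qb h2
    · intro p hp h1 h2
      have h3 := (hp (k+1+1) hk11k hk11k1).1
      rw [if_neg hk11k, if_neg hk11k1, if_pos rfl] at h3
      exact hothers qb (h3.symm.trans h2)
  · apply core F w' m E hE k ℓ pa qa pb qb hlk
      (fun t => if t = k then pa else if t = k+1 then qa else if t = ℓ then other pb else 0)
    · rw [if_pos rfl]
    · rw [if_neg hk1k, if_pos rfl]
    · intro hh
      have h1 := hh.1
      rw [if_neg hlk, if_neg hcase, if_pos rfl] at h1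
      exact hothers pb h1
    · intro p hp h1 h2
      have ht0k : ℓ - 1 ≠ k := by
        intro hh
        apply hcase
        rw [← hh, sub_add_cancel]
      have ht0l : ℓ - 1 ≠ ℓ := by simp
      have h3 := (hp (ℓ - 1) ht0k ht0l).2
      rw [sub_add_cancel] at h3
      rw [if_neg hlk, if_neg hcase, if_pos rfl] at h3
      exact hothers pb (h3.symm.trans h1)
end

section
/- For each k, with d even and k even, the space B_k of block-diagonal matrices whose nonzero entries lie in the rows/columns indexed by x_k and x_{k+1} and whose corresponding 2w²×2w² submatrix equals diag(I_w ⊗ Mᵀ, −I_w ⊗ M) for some M ∈ M_w(F), is contained in the Lie algebra 𝔤_{Tr-IMM} of Tr-IMM_{w,d}. -/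
open Matrix MvPolynomial

/-- The block-diagonal matrix of the space `B_k` associated to `M ∈ M_w(F)`.
Its nonzero entries are confined to the rows/columns indexed by the `x_k` and
`x_{k+1}` variables; under the paper's variable ordering (row-major for even `k`,
column-major for odd `k`) the corresponding `2w² × 2w²` submatrix is
`diag(I_w ⊗ Mᵀ, −I_w ⊗ M)` (for even `k` with `d` even).  In coordinates,
the row indexed by `x^{(k)}_{i,j}` carries the linear form `(Q_k · M)_{i,j}` and the
row indexed by `x^{(k+1)}_{i,j}` carries `(−M · Q_{k+1})_{i,j}`. -/
def Bmat (F : Type*) [Field F] (w d : ℕ) [NeZero d] (k : Fin d)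
    (M : Matrix (Fin w) (Fin w) F) :
    Matrix (Fin d × Fin w × Fin w) (Fin d × Fin w × Fin w) F :=
  fun a b =>
    if a.1 = k ∧ b.1 = k then (if a.2.1 = b.2.1 then M b.2.2 a.2.2 else 0)
    else if a.1 = k + 1 ∧ b.1 = k + 1 then
      (if a.2.2 = b.2.2 then - M a.2.1 b.2.1 else 0)
    else 0

section Aux
variable {F : Type*} [Field F] {σ : Type*} [Fintype σ] [DecidableEq σ]

theorem aux_dsum {ι : Type*} (s : Finset ι)
    (D : ι → Derivation F (MvPolynomial σ F) (MvPolynomial σ F)) (f : MvPolynomial σ F) :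
    (∑ i ∈ s, D i) f = ∑ i ∈ s, D i f := by
  induction s using Finset.cons_induction with
  | empty => simp
  | cons a s ha ih => simp [Finset.sum_cons, ih]

theorem aux_mapD_mul {w : ℕ} (D : Derivation F (MvPolynomial σ F) (MvPolynomial σ F))
    (A B : Matrix (Fin w) (Fin w) (MvPolynomial σ F)) :
    (A * B).map ⇑D = A.map ⇑D * B + A * B.map ⇑D := by
  refine Matrix.ext fun i j => ?_
  simp only [Matrix.map_apply, Matrix.mul_apply, map_sum, Derivation.leibniz, smul_eq_mul,
    Matrix.add_apply]
  rw [← Finset.sum_add_distrib]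
  refine Finset.sum_congr rfl fun x _ => by ring

theorem aux_mapD_trace {w : ℕ} (D : Derivation F (MvPolynomial σ F) (MvPolynomial σ F))
    (A : Matrix (Fin w) (Fin w) (MvPolynomial σ F)) :
    D A.trace = (A.map ⇑D).trace := by
  simp [Matrix.trace, Matrix.diag, map_sum]

theorem aux_mapD_one {w : ℕ} (D : Derivation F (MvPolynomial σ F) (MvPolynomial σ F)) :
    (1 : Matrix (Fin w) (Fin w) (MvPolynomial σ F)).map ⇑D = 0 := by
  refine Matrix.ext fun i j => ?_
  simp [Matrix.one_apply, Matrix.map_apply, apply_ite ⇑D]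

theorem aux_mapD_listprod {w : ℕ} (D : Derivation F (MvPolynomial σ F) (MvPolynomial σ F))
    (L : List (Matrix (Fin w) (Fin w) (MvPolynomial σ F))) (h : ∀ A ∈ L, A.map ⇑D = 0) :
    L.prod.map ⇑D = 0 := by
  induction L with
  | nil => simpa using aux_mapD_one D
  | cons A L ih =>
      rw [List.prod_cons, aux_mapD_mul, h A List.mem_cons_self,
        ih fun B hB => h B (List.mem_cons_of_mem A hB)]
      simp

end Aux

theorem stmt7 (F : Type*) [Field F] (w d : ℕ) [NeZero d]
    (hw : 2 ≤ w) (hd : 3 ≤ d) (hdeven : Even d)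
    (k : Fin d) (hk : Even (k : ℕ)) (M : Matrix (Fin w) (Fin w) F) :
    Bmat F w d k M ∈ lieAlg (trIMM F w d) := by
  classical
  set σ := (Fin d × Fin w × Fin w)
  set P := MvPolynomial σ F
  set E : Matrix σ σ F := Bmat F w d k M with hE
  set D : Derivation F P P := ∑ i : σ, ∑ j : σ, E i j • ((X j : P) • pderiv i) with hDdef
  -- basic numerology
  have hkd : (k : ℕ) + 1 < d := by
    by_contra h
    have hEq : (k : ℕ) + 1 = d := by omega
    rw [← hEq] at hdeven
    simp [Nat.even_add_one, hk] at hdeven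
  have hk1 : ((k + 1 : Fin d) : ℕ) = (k : ℕ) + 1 := by
    have : (k : ℕ) + 1 < d := hkd
    simp [Fin.val_add, Nat.mod_eq_of_lt this, Fin.val_one, Nat.mod_eq_of_lt (by omega : 1 < d)]
  have hkne : k ≠ k + 1 := by
    intro h
    have := congrArg Fin.val h
    rw [hk1] at this; omega
  -- formula for D applied
  have hD : ∀ f : P, D f = ∑ i : σ, ∑ j : σ, E i j • (X j * pderiv i f) := by
    intro f
    rw [hDdef, aux_dsum]
    refine Finset.sum_congr rfl fun i _ => ?_
    rw [aux_dsum]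
    simp [smul_smul]
  -- value of D on variables
  have hDX : ∀ a : σ, D (X a) = ∑ j : σ, E a j • X j := by
    intro a
    rw [hD]
    have : ∀ i : σ, ∑ j : σ, E i j • ((X j : P) * pderiv i (X a))
        = if i = a then ∑ j : σ, E a j • (X j : P) else 0 := by
      intro i
      by_cases h : i = a
      · subst h; simp [pderiv_X]
      · simp [pderiv_X, Pi.single_apply, h]
    simp only [this, Finset.sum_ite_eq', Finset.mem_univ, if_true]
    rw [Finset.sum_eq_single a (fun b _ hb => if_neg hb) (fun h => absurd (Finset.mem_univ a) h), if_pos rfl]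
  -- D on the symbolic matrices
  have hQk : (symQ F w d k).map ⇑D = symQ F w d k * (M.map (C : F → P)) := by
    refine Matrix.ext fun i j => ?_
    rw [Matrix.map_apply, symQ, hDX]
    rw [Fintype.sum_prod_type]
    simp only [hE, Bmat]
    rw [Finset.sum_eq_single k]
    · simp only [if_pos rfl, Matrix.mul_apply, Matrix.map_apply, symQ]
      rw [Fintype.sum_prod_type]
      rw [Finset.sum_eq_single i]
      · simp [smul_eq_C_mul, mul_comm]
      · intro r _ hr
        simp [hr.symm, Ne.symm hr]
      · simp
    · intro m _ hm
      simp [hm, Ne.symm hm]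
      intro hd1; omega
    · simp
  have hQk1 : (symQ F w d (k + 1)).map ⇑D = -((M.map (C : F → P)) * symQ F w d (k + 1)) := by
    refine Matrix.ext fun i j => ?_
    rw [Matrix.map_apply, symQ, hDX, Fintype.sum_prod_type]
    simp only [hE, Bmat]
    rw [Finset.sum_eq_single (k + 1)]
    · simp only [Ne.symm hkne, false_and, if_false, if_pos rfl, and_true, if_pos (rfl : k+1 = k+1)]
      rw [Fintype.sum_prod_type]
      simp only [Matrix.neg_apply, Matrix.mul_apply, Matrix.map_apply, symQ]
      rw [← Finset.sum_neg_distrib]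
      refine Finset.sum_congr rfl fun r _ => ?_
      rw [Finset.sum_eq_single j]
      · simp [smul_eq_C_mul]
      · intro c _ hc
        simp [Ne.symm hc]
      · simp
    · intro m _ hm
      simp [Ne.symm hkne, hm]
    · simp
  have hQother : ∀ m : Fin d, m ≠ k → m ≠ k + 1 → (symQ F w d m).map ⇑D = 0 := by
    intro m h1 h2
    refine Matrix.ext fun i j => ?_
    rw [Matrix.map_apply, symQ, hDX]
    simp [hE, Bmat, h1, h2]
  -- reduce membership to vanishing of D on trIMM
  show ∑ i : σ, ∑ j : σ, E i j • (X j * (pderiv i) (trIMM F w d)) = 0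
  rw [← hD, trIMM, aux_mapD_trace]
  set L : List (Matrix (Fin w) (Fin w) P) := (List.finRange d).map (symQ F w d) with hLdef
  have hlen : L.length = d := by simp [hLdef]
  have hgetL : ∀ (i : ℕ) (hi : i < L.length), L[i] = symQ F w d ⟨i, hlen ▸ hi⟩ := by
    intro i hi
    simp [hLdef, List.getElem_map, Fin.cast]
  have hsplit : L = L.take (k : ℕ) ++
      symQ F w d k :: symQ F w d (k + 1) :: L.drop ((k : ℕ) + 2) := by
    conv_lhs => rw [← List.take_append_drop (k : ℕ) L]
    congr 1
    rw [List.drop_eq_getElem_cons (by omega : (k : ℕ) < L.length)]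
    congr 1
    · rw [hgetL]
    rw [List.drop_eq_getElem_cons (by omega : (k : ℕ) + 1 < L.length)]
    congr 1
    · rw [hgetL]; exact congrArg (symQ F w d) (Fin.ext (by simp [hk1]))
  have htake : (L.take (k : ℕ)).prod.map ⇑D = 0 := by
    refine aux_mapD_listprod D _ fun A hA => ?_
    rw [List.mem_iff_getElem] at hA
    obtain ⟨i, hi, rfl⟩ := hA
    have hi2 : i < (k : ℕ) := by
      have := hi; rw [List.length_take, hlen] at this; omega
    rw [List.getElem_take, hgetL]
    refine hQother _ (fun h => ?_) (fun h => ?_)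
    · have := congrArg Fin.val h; simp at this; omega
    · have := congrArg Fin.val h; rw [hk1] at this; simp at this; omega
  have hdrop : (L.drop ((k : ℕ) + 2)).prod.map ⇑D = 0 := by
    refine aux_mapD_listprod D _ fun A hA => ?_
    rw [List.mem_iff_getElem] at hA
    obtain ⟨i, hi, rfl⟩ := hA
    rw [List.getElem_drop, hgetL]
    refine hQother _ (fun h => ?_) (fun h => ?_)
    · have := congrArg Fin.val h; simp at this; omega
    · have := congrArg Fin.val h; rw [hk1] at this; simp at this; omega
  rw [hsplit, List.prod_append, List.prod_cons, List.prod_cons,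
    aux_mapD_mul, aux_mapD_mul, aux_mapD_mul, htake, hdrop, hQk, hQk1]
  have hzero : ∀ (T A B R M' : Matrix (Fin w) (Fin w) P),
      0 * (A * (B * R)) + T * (A * M' * (B * R) + A * (-(M' * B) * R + B * 0)) = 0 := by
    intros; simp only [zero_mul, mul_zero, add_zero, zero_add, neg_mul, mul_neg, mul_assoc, mul_add, add_neg_cancel, Matrix.zero_mul, Matrix.mul_zero, Matrix.neg_mul, Matrix.mul_neg, Matrix.mul_assoc, Matrix.mul_add]; exact add_neg_cancel _
  rw [hzero, Matrix.trace_zero]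
end

section
/- Suppose Q'_k and Q_k are w×w symbolic matrices with distinct variable entries (Q'_k having entries that are linear forms in the variables of Q_k, and Q'_{k+1} having entries that are linear forms in the variables of Q_{k+1}), and Q'_k·Q_{k+1} + Q_k·Q'_{k+1} = 0. Then there exists a w×w scalar matrix M such that Q'_k = Q_k·M and Q'_{k+1} = −M·Q_{k+1}. -/
open Matrix MvPolynomial

theorem stmt9 (F : Type*) [Field F] (w : ℕ)
    (Q0 Q1 : Matrix (Fin w) (Fin w) (MvPolynomial (Fin 2 × Fin w × Fin w) F))
    (hQ0 : ∀ i j, Q0 i j = MvPolynomial.X (0, i, j))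
    (hQ1 : ∀ i j, Q1 i j = MvPolynomial.X (1, i, j))
    (Q0' Q1' : Matrix (Fin w) (Fin w) (MvPolynomial (Fin 2 × Fin w × Fin w) F))
    (A B : Fin w → Fin w → Fin w → Fin w → F)
    (hQ0' : ∀ i j, Q0' i j =
      ∑ p, ∑ q, A i j p q • MvPolynomial.X (((0 : Fin 2), p, q) : Fin 2 × Fin w × Fin w))
    (hQ1' : ∀ i j, Q1' i j =
      ∑ p, ∑ q, B i j p q • MvPolynomial.X (((1 : Fin 2), p, q) : Fin 2 × Fin w × Fin w))
    (h : Q0' * Q1 + Q0 * Q1' = 0) :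
    ∃ M : Matrix (Fin w) (Fin w) F,
      Q0' = Q0 * M.map MvPolynomial.C ∧ Q1' = -(M.map MvPolynomial.C * Q1) := by
  rcases Nat.eq_zero_or_pos w with hw | hw
  · subst hw
    exact ⟨0, by ext i j; exact i.elim0, by ext i j; exact i.elim0⟩
  have key : ∀ i j p q a b,
      (if j = b then A i a p q else 0) + (if i = p then B q j a b else 0) = 0 := by
    intro i j p q a b
    have h' := congrFun (congrFun h i) j
    simp only [Matrix.add_apply, Matrix.mul_apply, Matrix.zero_apply, hQ0, hQ1, hQ0', hQ1'] at h'
    have h2 := congrArg (MvPolynomial.eval (fun v : Fin 2 × Fin w × Fin w =>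
      if v = ((0:Fin 2),p,q) ∨ v = ((1:Fin 2),a,b) then (1:F) else 0)) h'
    simp only [map_add, map_sum, _root_.map_mul, eval_X, MvPolynomial.smul_eq_C_mul, eval_C,
      map_zero, Prod.mk.injEq] at h2
    simp [mul_ite, ite_mul, ite_and, Finset.sum_ite_eq, Finset.sum_ite_eq'] at h2
    convert h2 using 2
  set i0 : Fin w := ⟨0, hw⟩
  -- A vanishes off the diagonal in its "p" slot
  have hA0 : ∀ i a p q, p ≠ i → A i a p q = 0 := by
    intro i a p q hpi
    have := key i i0 p q a i0
    simpa [Ne.symm hpi] using this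
  -- B vanishes unless its last index equals j
  have hB0 : ∀ q j a b, b ≠ j → B q j a b = 0 := by
    intro q j a b hbj
    have := key i0 j i0 q a b
    simpa [Ne.symm hbj] using this
  -- the relation
  have hrel : ∀ i j q a, A i a i q + B q j a j = 0 := by
    intro i j q a
    simpa using key i j i q a j
  have hAind : ∀ i i' a q, A i a i q = A i' a i' q := by
    intro i i' a q
    have h1 := hrel i i0 q a
    have h2 := hrel i' i0 q a
    linear_combination h1 - h2
  refine ⟨fun q a => A i0 a i0 q, ?_, ?_⟩
  · refine Matrix.ext fun i j => ?_
    rw [hQ0' i j, Matrix.mul_apply]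
    simp only [Matrix.map_apply, hQ0]
    rw [Finset.sum_eq_single i (fun p _ hpi => by
      simp [fun q' => hA0 i j p q' hpi]) (by simp)]
    refine Finset.sum_congr rfl fun l _ => ?_
    rw [hAind i i0 j l, MvPolynomial.smul_eq_C_mul, mul_comm]
    rfl
  · refine Matrix.ext fun i j => ?_
    rw [hQ1' i j, Matrix.neg_apply, Matrix.mul_apply, ← Finset.sum_neg_distrib]
    refine Finset.sum_congr rfl fun p _ => ?_
    rw [Finset.sum_eq_single j (fun q _ hqj => by simp [hB0 i j p q hqj]) (by simp)]
    simp only [Matrix.map_apply, hQ1]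
    have hb := hrel i0 j i p
    rw [MvPolynomial.smul_eq_C_mul, show B i j p j = -(A i0 p i0 i) by linear_combination hb]
    simp
    rfl
end

section
/- There exists a diagonal matrix in the Lie algebra 𝔤_{Tr-IMM_{w,d}} all of whose n = w²d diagonal entries are pairwise distinct, provided the field F is large enough (|F| > n³ suffices). -/
open Matrix MvPolynomial

section Aux

variable {F : Type*} [Field F]

/-- cyclic successor on `Fin d` -/
def nxt {d : ℕ} (k : Fin d) : Fin d := ⟨(k.val + 1) % d, Nat.mod_lt _ k.pos⟩

lemma nxt_val {d : ℕ} (k : Fin d) : (nxt k).val = (k.val + 1) % d := rfl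

lemma nxt_ne {d : ℕ} (hd : 2 ≤ d) (k : Fin d) : nxt k ≠ k := by
  intro h
  have hv : (k.val + 1) % d = k.val := by rw [← nxt_val, h]
  rcases Nat.lt_or_ge (k.val + 1) d with h' | h'
  · rw [Nat.mod_eq_of_lt h'] at hv; omega
  · have hk := k.isLt
    have hh : k.val + 1 = d := by omega
    rw [hh, Nat.mod_self] at hv
    omega

lemma nxt_nxt_ne {d : ℕ} (hd : 3 ≤ d) (k : Fin d) : nxt (nxt k) ≠ k := by
  intro h
  have hv : ((k.val + 1) % d + 1) % d = k.val := by rw [← nxt_val, ← nxt_val, h]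
  have hk := k.isLt
  rcases Nat.lt_or_ge (k.val + 1) d with h1 | h1
  · rw [Nat.mod_eq_of_lt h1] at hv
    rcases Nat.lt_or_ge (k.val + 1 + 1) d with h2 | h2
    · rw [Nat.mod_eq_of_lt h2] at hv; omega
    · have hh : k.val + 1 + 1 = d := by omega
      rw [hh, Nat.mod_self] at hv; omega
  · have hh : k.val + 1 = d := by omega
    rw [hh, Nat.mod_self] at hv
    rw [Nat.mod_eq_of_lt (by omega)] at hv
    omega

/-- The Euler-type operator `f ↦ ∑ c a • X a ∂_a f` as a linear map. -/
noncomputable def Lop {σ : Type*} [Fintype σ] [DecidableEq σ] (c : σ → F) :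
    MvPolynomial σ F →ₗ[F] MvPolynomial σ F where
  toFun f := ∑ a, MvPolynomial.C (c a) * (MvPolynomial.X a * MvPolynomial.pderiv a f)
  map_add' f g := by simp [mul_add, Finset.sum_add_distrib]
  map_smul' r f := by simp [mul_smul_comm, Finset.smul_sum]

lemma Lop_apply {σ : Type*} [Fintype σ] [DecidableEq σ] (c : σ → F) (f : MvPolynomial σ F) :
    Lop c f = ∑ a, MvPolynomial.C (c a) * (MvPolynomial.X a * MvPolynomial.pderiv a f) := rfl

lemma Lop_X {σ : Type*} [Fintype σ] [DecidableEq σ] (c : σ → F) (b : σ) :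
    Lop c (X b) = MvPolynomial.C (c b) * X b := by
  rw [Lop_apply, Finset.sum_eq_single b]
  · simp [pderiv_X_self]
  · intro a _ hab
    rw [pderiv_X_of_ne (Ne.symm hab)]
    ring
  · intro h; exact absurd (Finset.mem_univ b) h

lemma Lop_one {σ : Type*} [Fintype σ] [DecidableEq σ] (c : σ → F) :
    Lop c (1 : MvPolynomial σ F) = 0 := by
  rw [Lop_apply]
  simp [pderiv_one]

lemma Lop_mul {σ : Type*} [Fintype σ] [DecidableEq σ] (c : σ → F) (p q : MvPolynomial σ F) :
    Lop c (p * q) = p * Lop c q + q * Lop c p := by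
  rw [Lop_apply, Lop_apply, Lop_apply, Finset.mul_sum, Finset.mul_sum, ← Finset.sum_add_distrib]
  refine Finset.sum_congr rfl fun a _ => ?_
  rw [pderiv_mul]
  ring

end Aux

section Mat

variable {F : Type*} [Field F] {w d : ℕ}

/-- weights -/
def cwt (t : Fin d × Fin w → F) : Fin d × Fin w × Fin w → F :=
  fun a => t (nxt a.1, a.2.2) - t (a.1, a.2.1)

noncomputable def Tdiag (t : Fin d × Fin w → F) (hd : 0 < d) (m : ℕ) :
    Matrix (Fin w) (Fin w) (MvPolynomial (Fin d × Fin w × Fin w) F) :=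
  Matrix.diagonal fun i => MvPolynomial.C (t (⟨m % d, Nat.mod_lt _ hd⟩, i))

lemma LM_mul {σ : Type*} [Fintype σ] [DecidableEq σ] (c : σ → F)
    (M N : Matrix (Fin w) (Fin w) (MvPolynomial σ F)) :
    (M * N).map (Lop c) = M.map (Lop c) * N + M * N.map (Lop c) := by
  refine Matrix.ext fun i j => ?_
  simp only [Matrix.map_apply, Matrix.mul_apply, Matrix.add_apply]
  rw [map_sum (Lop c), ← Finset.sum_add_distrib]
  refine Finset.sum_congr rfl fun x _ => ?_
  rw [Lop_mul]
  ring

lemma LQ (t : Fin d × Fin w → F) (hd : 0 < d) (k : Fin d) :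
    (symQ F w d k).map (Lop (cwt t)) =
      symQ F w d k * Tdiag t hd (k.val + 1) - Tdiag t hd k.val * symQ F w d k := by
  have hk : (⟨k.val % d, Nat.mod_lt _ hd⟩ : Fin d) = k := Fin.ext (Nat.mod_eq_of_lt k.isLt)
  have hk1 : (⟨(k.val + 1) % d, Nat.mod_lt _ hd⟩ : Fin d) = nxt k := rfl
  refine Matrix.ext fun i j => ?_
  simp only [Matrix.map_apply, Matrix.sub_apply, Tdiag, Matrix.mul_diagonal,
    Matrix.diagonal_mul, symQ, hk, hk1]
  rw [Lop_X]
  show MvPolynomial.C (t (nxt k, j) - t (k, i)) * X (k, i, j) = _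
  rw [map_sub]
  ring

noncomputable def Ssuf (F : Type*) [Field F] (w d : ℕ) (k : ℕ) :
    Matrix (Fin w) (Fin w) (MvPolynomial (Fin d × Fin w × Fin w) F) :=
  (((List.finRange d).map (symQ F w d)).drop k).prod

lemma Ssuf_succ {k : ℕ} (hk : k < d) :
    Ssuf F w d k = symQ F w d ⟨k, hk⟩ * Ssuf F w d (k + 1) := by
  unfold Ssuf
  rw [List.drop_eq_getElem_cons (by simpa using hk), List.prod_cons]
  congr 1
  simp

lemma Ssuf_d : Ssuf F w d d = 1 := by
  unfold Ssuf
  rw [List.drop_eq_nil_of_le (by simp)]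
  exact List.prod_nil

lemma map_one_Lop {σ : Type*} [Fintype σ] [DecidableEq σ] (c : σ → F) :
    (1 : Matrix (Fin w) (Fin w) (MvPolynomial σ F)).map (Lop c) = 0 := by
  refine Matrix.ext fun i j => ?_
  simp only [Matrix.map_apply, Matrix.one_apply, Matrix.zero_apply]
  by_cases h : i = j <;> simp [h, Lop_one]

lemma tele (t : Fin d × Fin w → F) (hd : 0 < d) :
    ∀ m k, k + m = d →
      (Ssuf F w d k).map (Lop (cwt t)) =
        Ssuf F w d k * Tdiag t hd 0 - Tdiag t hd k * Ssuf F w d k := by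
  intro m
  induction m with
  | zero =>
    intro k hk
    have hkd : k = d := by omega
    rw [hkd, Ssuf_d, map_one_Lop]
    have hT : Tdiag t hd d = Tdiag t hd 0 := by
      have hfin : (⟨d % d, Nat.mod_lt _ hd⟩ : Fin d) = ⟨0 % d, Nat.mod_lt _ hd⟩ :=
        Fin.ext (by simp)
      unfold Tdiag
      rw [hfin]
    rw [hT, one_mul, mul_one, sub_self]
  | succ m ih =>
    intro k hk
    have hkd : k < d := by omega
    rw [Ssuf_succ hkd, LM_mul, LQ t hd, ih (k + 1) (by omega)]
    show (symQ F w d ⟨k, hkd⟩ * Tdiag t hd (k + 1) - Tdiag t hd k * symQ F w d ⟨k, hkd⟩) *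
        Ssuf F w d (k + 1) + symQ F w d ⟨k, hkd⟩ *
        (Ssuf F w d (k + 1) * Tdiag t hd 0 - Tdiag t hd (k + 1) * Ssuf F w d (k + 1)) = _
    noncomm_ring

lemma Lop_trIMM (t : Fin d × Fin w → F) (hd : 0 < d) :
    Lop (cwt t) (trIMM F w d) = 0 := by
  have h0 : trIMM F w d = Matrix.trace (Ssuf F w d 0) := by
    unfold trIMM Ssuf
    rw [List.drop_zero]
  rw [h0]
  have h1 : ∀ M : Matrix (Fin w) (Fin w) (MvPolynomial (Fin d × Fin w × Fin w) F),
      Lop (cwt t) (Matrix.trace M) = Matrix.trace (M.map (Lop (cwt t))) := by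
    intro M
    rw [Matrix.trace, Matrix.trace]
    rw [map_sum (Lop (cwt t))]
    rfl
  rw [h1, tele t hd d 0 (by omega)]
  rw [Matrix.trace_sub, Matrix.trace_mul_comm, sub_self]

end Mat

section Distinct

variable {F : Type*} [Field F]

lemma lin_ne_zero {ν : Type*} [DecidableEq ν] {u v u' v' : ν} (huv : u ≠ v) (huv' : u' ≠ v')
    (hp : ¬(u = u' ∧ v = v')) (hs : ¬(u = v' ∧ v = u')) :
    (X u - X v - (X u' - X v') : MvPolynomial ν F) ≠ 0 := by
  have key : ∀ x : ν, MvPolynomial.coeff (Finsupp.single x 1)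
      ((X u - X v - (X u' - X v')) : MvPolynomial ν F) =
      (if u = x then (1 : F) else 0) - (if v = x then (1 : F) else 0) -
        ((if u' = x then (1 : F) else 0) - (if v' = x then (1 : F) else 0)) := by
    intro x
    simp only [coeff_sub, coeff_X', Finsupp.single_left_inj (one_ne_zero : (1 : ℕ) ≠ 0)]
  intro h0
  by_cases h1 : u = u'
  · have h2 : v ≠ v' := fun hh => hp ⟨h1, hh⟩
    have hk := key v'
    rw [h0, coeff_zero, if_neg (show ¬ u = v' from fun hh => huv' (h1.symm.trans hh)),
      if_neg h2, if_neg huv', if_pos rfl] at hk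
    norm_num at hk
  · by_cases h2 : u = v'
    · have h3 : ¬ v = u' := fun hh => hs ⟨h2, hh⟩
      have hk := key v
      rw [h0, coeff_zero, if_neg huv, if_pos rfl,
        if_neg (show ¬ u' = v from fun hh => h3 hh.symm),
        if_neg (show ¬ v' = v from fun hh => huv (h2.trans hh))] at hk
      have : (1 : F) = 0 := by linear_combination hk
      exact one_ne_zero this
    · have hk := key u
      rw [h0, coeff_zero, if_pos rfl, if_neg (show ¬ v = u from fun hh => huv hh.symm),
        if_neg (show ¬ u' = u from fun hh => h1 hh.symm),
        if_neg (show ¬ v' = u from fun hh => h2 hh.symm)] at hk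
      norm_num at hk

end Distinct

def nd1 {w d : ℕ} (a : Fin d × Fin w × Fin w) : Fin d × Fin w := (nxt a.1, a.2.2)
def nd2 {w d : ℕ} (a : Fin d × Fin w × Fin w) : Fin d × Fin w := (a.1, a.2.1)

lemma exists_good_t (F : Type*) [Field F] (w d : ℕ) (hw : 2 ≤ w) (hd : 3 ≤ d)
    (hF : (((w ^ 2 * d) ^ 3 : ℕ) : Cardinal) < Cardinal.mk F) :
    ∃ t : Fin d × Fin w → F, ∀ a b : Fin d × Fin w × Fin w, a ≠ b →
      t (nd1 a) - t (nd2 a) ≠ t (nd1 b) - t (nd2 b) := by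
  classical
  have hd2 : 2 ≤ d := by omega
  set P : MvPolynomial (Fin d × Fin w) F :=
    ∏ p ∈ (Finset.univ : Finset (Fin d × Fin w × Fin w)).offDiag,
      ((X (nd1 p.1) - X (nd2 p.1)) - (X (nd1 p.2) - X (nd2 p.2))) with hPdef
  have hfac : ∀ p ∈ (Finset.univ :
      Finset (Fin d × Fin w × Fin w)).offDiag,
      ((X (nd1 p.1) - X (nd2 p.1)) - (X (nd1 p.2) - X (nd2 p.2)) : MvPolynomial _ F) ≠ 0 := by
    rintro ⟨⟨ka, ia, ja⟩, kb, ib, jb⟩ hp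
    have hab : ((ka, ia, ja) : Fin d × Fin w × Fin w) ≠ (kb, ib, jb) :=
      (Finset.mem_offDiag.mp hp).2.2
    refine lin_ne_zero ?_ ?_ ?_ ?_
    · exact fun hh => nxt_ne hd2 ka (congrArg Prod.fst hh)
    · exact fun hh => nxt_ne hd2 kb (congrArg Prod.fst hh)
    · rintro ⟨e1, e2⟩
      simp only [nd1, nd2, Prod.mk.injEq] at e1 e2
      exact hab (by simp [Prod.ext_iff, e1.2, e2.1, e2.2])
    · rintro ⟨e1, e2⟩
      simp only [nd1, nd2, Prod.mk.injEq] at e1 e2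
      apply nxt_nxt_ne hd ka
      rw [← e1.1] at e2
      exact e2.1.symm
  have hP0 : P ≠ 0 := by
    rw [hPdef]
    exact Finset.prod_ne_zero_iff.mpr hfac
  have hPhom : P.IsHomogeneous ((Finset.univ :
      Finset (Fin d × Fin w × Fin w)).offDiag.card) := by
    have := MvPolynomial.IsHomogeneous.prod (Finset.univ :
        Finset (Fin d × Fin w × Fin w)).offDiag
      (fun p => ((X (nd1 p.1) - X (nd2 p.1)) - (X (nd1 p.2) - X (nd2 p.2)) : MvPolynomial _ F))
      (fun _ => 1)
      (fun p _ => (((isHomogeneous_X F _).sub (isHomogeneous_X F _)).sub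
        ((isHomogeneous_X F _).sub (isHomogeneous_X F _))))
    simpa using this
  have hcardle : (((Finset.univ :
      Finset (Fin d × Fin w × Fin w)).offDiag.card : Cardinal))
      ≤ Cardinal.mk F := by
    have hn : (Finset.univ : Finset (Fin d × Fin w × Fin w)).card = w ^ 2 * d := by
      simp [Finset.card_univ]
      ring
    have h1 : (Finset.univ :
        Finset (Fin d × Fin w × Fin w)).offDiag.card
        ≤ (w ^ 2 * d) ^ 3 := by
      rw [Finset.offDiag_card, hn]
      have hpos : 1 ≤ w ^ 2 * d := by nlinarith
      calc w ^ 2 * d * (w ^ 2 * d) - w ^ 2 * d ≤ w ^ 2 * d * (w ^ 2 * d) := Nat.sub_le _ _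
        _ ≤ (w ^ 2 * d) ^ 3 := by nlinarith
    calc ((_ : ℕ) : Cardinal) ≤ (((w ^ 2 * d) ^ 3 : ℕ) : Cardinal) := by exact_mod_cast h1
      _ ≤ Cardinal.mk F := le_of_lt hF
  have hex : ∃ r : Fin d × Fin w → F, MvPolynomial.eval r P ≠ 0 := by
    by_contra hcon
    push_neg at hcon
    exact hP0 (hPhom.eq_zero_of_forall_eval_eq_zero_of_le_card hcon hcardle)
  obtain ⟨r, hr⟩ := hex
  refine ⟨r, fun a b hab heq => ?_⟩
  apply hr
  rw [hPdef, map_prod]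
  refine Finset.prod_eq_zero (i := (a, b)) (Finset.mem_offDiag.mpr
    ⟨Finset.mem_univ a, Finset.mem_univ b, hab⟩) ?_
  simp only [map_sub, eval_X]
  rw [heq]
  ring

theorem stmt10 (F : Type*) [Field F] (w d : ℕ) (hw : 2 ≤ w) (hd : 3 ≤ d)
    (hF : (((w ^ 2 * d) ^ 3 : ℕ) : Cardinal) < Cardinal.mk F) :
    ∃ E ∈ lieAlg (trIMM F w d),
      (∀ a b : Fin d × Fin w × Fin w, a ≠ b → E a b = 0) ∧
      (∀ a b : Fin d × Fin w × Fin w, a ≠ b → E a a ≠ E b b) := by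
  have hd0 : 0 < d := by omega
  obtain ⟨t, hdist⟩ := exists_good_t F w d hw hd hF
  refine ⟨Matrix.diagonal (cwt t), ?_, ?_, ?_⟩
  · show ∑ i, ∑ j, Matrix.diagonal (cwt t) i j • (X j * pderiv i (trIMM F w d)) = 0
    have hrow : ∀ i : Fin d × Fin w × Fin w,
        ∑ j, Matrix.diagonal (cwt t) i j • (X j * pderiv i (trIMM F w d))
          = MvPolynomial.C (cwt t i) * (X i * pderiv i (trIMM F w d)) := by
      intro i
      rw [Finset.sum_eq_single i]
      · rw [Matrix.diagonal_apply_eq, MvPolynomial.smul_eq_C_mul]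
      · intro j _ hj
        rw [Matrix.diagonal_apply_ne _ (Ne.symm hj), zero_smul]
      · exact fun h => absurd (Finset.mem_univ i) h
    rw [Finset.sum_congr rfl fun i _ => hrow i, ← Lop_apply]
    exact Lop_trIMM t hd0
  · intro a b hab
    exact Matrix.diagonal_apply_ne _ hab
  · intro a b hab
    rw [Matrix.diagonal_apply_eq, Matrix.diagonal_apply_eq]
    exact hdist a b hab
end

section
/- Under the hypotheses of the Lie-algebra characterization of Tr-IMM: if f is a nonzero d-tensor with B_k ⊆ 𝔤_f for all k, then the coefficient in f of every set-multilinear monomial that is not a path monomial is zero. -/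
open Matrix MvPolynomial

lemma sum_one_exists {α : Type*} [Fintype α] (g : α → ℕ) (h : ∑ x, g x = 1) :
    ∃ x, g x = 1 ∧ ∀ y, y ≠ x → g y = 0 := by
  classical
  have hx : ∃ x, g x ≠ 0 := by
    by_contra hc
    push_neg at hc
    simp [hc] at h
  obtain ⟨x, hx⟩ := hx
  have h1 : g x ≤ 1 := h ▸ Finset.single_le_sum (fun _ _ => Nat.zero_le _) (Finset.mem_univ x)
  have hgx : g x = 1 := le_antisymm h1 (Nat.one_le_iff_ne_zero.2 hx)
  refine ⟨x, hgx, fun y hy => ?_⟩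
  have hadd := Finset.add_sum_erase Finset.univ g (Finset.mem_univ x)
  have hrest : ∑ y ∈ Finset.univ.erase x, g y = 0 := by omega
  exact (Finset.sum_eq_zero_iff.1 hrest) y (Finset.mem_erase.2 ⟨hy, Finset.mem_univ y⟩)

lemma coeff_pderiv' {σ R : Type*} [CommSemiring R] [DecidableEq σ] (v : σ)
    (f : MvPolynomial σ R) (n : σ →₀ ℕ) :
    coeff n (pderiv v f) = (n v + 1) * coeff (n + Finsupp.single v 1) f := by
  induction f using MvPolynomial.induction_on' with
  | monomial u a =>
    rw [pderiv_monomial]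
    simp only [coeff_monomial]
    by_cases h : u = n + Finsupp.single v 1
    · subst h
      have h1 : n + Finsupp.single v 1 - Finsupp.single v 1 = n := by
        ext x
        simp only [Finsupp.coe_add, Finsupp.coe_tsub, Pi.add_apply, Pi.sub_apply,
          Finsupp.single_apply]
        by_cases hx : v = x <;> simp [hx]
      rw [if_pos h1, if_pos rfl]
      simp only [Finsupp.coe_add, Pi.add_apply, Finsupp.single_apply, if_pos rfl]
      push_cast
      ring
    · rw [if_neg h]
      by_cases h2 : u - Finsupp.single v 1 = n
      · rw [if_pos h2]
        by_cases h3 : u v = 0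
        · simp [h3]
        · exfalso
          apply h
          rw [← h2]
          ext x
          simp only [Finsupp.coe_add, Finsupp.coe_tsub, Pi.add_apply, Pi.sub_apply,
            Finsupp.single_apply]
          by_cases hx : v = x
          · subst hx; simp; omega
          · simp [hx]
      · rw [if_neg h2, mul_zero]
  | add p q hp hq => simp [coeff_add, hp, hq, mul_add]

theorem stmt16 (F : Type*) [Field F] (w d : ℕ) [NeZero d] (hw : 2 ≤ w) (hd : 3 ≤ d)
    (f : MvPolynomial (Fin d × Fin w × Fin w) F) (hf0 : f ≠ 0)
    (hsm : ∀ m ∈ f.support, ∀ k : Fin d,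
      (∑ i : Fin w, ∑ j : Fin w, m (k, i, j)) = 1)
    (hB : ∀ (k : Fin d) (M : Matrix (Fin w) (Fin w) F),
      Bmat F w d k M ∈ lieAlg f)
    (m : (Fin d × Fin w × Fin w) →₀ ℕ)
    (hm : ∀ k : Fin d, (∑ i : Fin w, ∑ j : Fin w, m (k, i, j)) = 1)
    (hnp : ¬ ∃ idx : Fin d → Fin w,
      m = ∑ k : Fin d,
        Finsupp.single ((k, idx k, idx (k + 1)) : Fin d × Fin w × Fin w) 1) :
    MvPolynomial.coeff m f = 0 := by
  classical
  -- extract the unique position of each layer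
  have hP : ∀ k : Fin d, ∃ p : Fin w × Fin w, m (k, p.1, p.2) = 1 ∧
      ∀ q : Fin w × Fin w, q ≠ p → m (k, q.1, q.2) = 0 := by
    intro k
    apply sum_one_exists
    rw [Fintype.sum_prod_type]
    exact hm k
  choose p hp1 hp2 using hP
  have hmval : ∀ (k : Fin d) (i j : Fin w),
      m (k, i, j) = if (i, j) = p k then 1 else 0 := by
    intro k i j
    by_cases h : (i, j) = p k
    · rw [if_pos h]
      have : ((k, i, j) : Fin d × Fin w × Fin w) = (k, (p k).1, (p k).2) := by
        rw [← h]
      rw [this]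
      exact hp1 k
    · rw [if_neg h]
      exact hp2 k (i, j) h
  -- there is a broken link
  have hk : ∃ k : Fin d, (p k).2 ≠ (p (k + 1)).1 := by
    by_contra hcon
    push_neg at hcon
    apply hnp
    refine ⟨fun k => (p k).1, ?_⟩
    ext x
    obtain ⟨k', i, j⟩ := x
    rw [Finsupp.finset_sum_apply]
    rw [Finset.sum_eq_single k'
      (fun kk _ hne => by
        simp only [Finsupp.single_apply]
        exact if_neg (fun hh => hne (congrArg Prod.fst hh)))
      (fun h => absurd (Finset.mem_univ _) h)]
    simp only [Finsupp.single_apply]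
    rw [hmval]
    rw [show p k' = ((p k').1, (p (k' + 1)).1) from by rw [← hcon k']]
    split_ifs with h1 h2 h3
    · rfl
    · exfalso
      apply h2
      simp only [Prod.mk.injEq, eq_self_iff_true, true_and] at h1 ⊢
      exact ⟨h1.1.symm, h1.2.symm⟩
    · exfalso
      apply h1
      simp only [Prod.mk.injEq, eq_self_iff_true, true_and] at h3 ⊢
      exact ⟨h3.1.symm, h3.2.symm⟩
    · rfl
  obtain ⟨k, hbc⟩ := hk
  set a := (p k).1 with ha
  set b := (p k).2 with hb
  set c := (p (k + 1)).1 with hcdef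
  -- k ≠ k + 1
  have hkk1 : k ≠ k + 1 := by
    intro h
    have h0 : (0 : Fin d) = 1 := add_left_cancel (a := k) (by rw [add_zero, ← h])
    have h1 := congrArg Fin.val h0
    rw [Fin.val_zero, Fin.val_one'] at h1
    have h2 : 1 % d = 1 := Nat.mod_eq_of_lt (by omega)
    omega
  have hmab : m (k, a, b) = 1 := hp1 k
  -- the modified monomial
  set t : (Fin d × Fin w × Fin w) →₀ ℕ := m - Finsupp.single (k, a, b) 1 with htdef
  set m' : (Fin d × Fin w × Fin w) →₀ ℕ := t + Finsupp.single (k, a, c) 1 with hm'def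
  have hm'val : ∀ x : Fin d × Fin w × Fin w,
      m' x = m x - (if ((k, a, b) : Fin d × Fin w × Fin w) = x then 1 else 0)
        + (if ((k, a, c) : Fin d × Fin w × Fin w) = x then 1 else 0) := by
    intro x
    rw [hm'def, Finsupp.add_apply, htdef, Finsupp.tsub_apply, Finsupp.single_apply,
      Finsupp.single_apply]
  have hz1 : ∀ i : Fin w, i ≠ a → m' (k, i, c) = 0 := by
    intro i hi
    rw [hm'val, hmval]
    have h1 : ¬ ((i, c) = p k) := fun hh => hi ((congrArg Prod.fst hh).trans ha.symm)
    have h2 : ¬ (((k, a, b) : Fin d × Fin w × Fin w) = (k, i, c)) := by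
      simp only [Prod.mk.injEq]
      rintro ⟨-, h, -⟩
      exact hi h.symm
    have h3 : ¬ (((k, a, c) : Fin d × Fin w × Fin w) = (k, i, c)) := by
      simp only [Prod.mk.injEq]
      rintro ⟨-, h, -⟩
      exact hi h.symm
    rw [if_neg h1, if_neg h2, if_neg h3]
  have hz2 : ∀ j : Fin w, m' (k + 1, b, j) = 0 := by
    intro j
    rw [hm'val, hmval]
    have h1 : ¬ ((b, j) = p (k + 1)) :=
      fun hh => hbc ((congrArg Prod.fst hh).trans hcdef.symm)
    have h2 : ¬ (((k, a, b) : Fin d × Fin w × Fin w) = (k + 1, b, j)) := by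
      simp only [Prod.mk.injEq]
      rintro ⟨h, -⟩
      exact hkk1 h
    have h3 : ¬ (((k, a, c) : Fin d × Fin w × Fin w) = (k + 1, b, j)) := by
      simp only [Prod.mk.injEq]
      rintro ⟨h, -⟩
      exact hkk1 h
    rw [if_neg h1, if_neg h2, if_neg h3]
  have hm'ac : m' (k, a, c) = 1 := by
    rw [hm'val, hmval]
    have h1 : ¬ ((a, c) = p k) :=
      fun hh => hbc (hb.trans (congrArg Prod.snd hh).symm)
    have h2 : ¬ (((k, a, b) : Fin d × Fin w × Fin w) = (k, a, c)) := by
      simp only [Prod.mk.injEq]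
      rintro ⟨-, -, h⟩
      exact hbc h
    rw [if_neg h1, if_neg h2, if_pos rfl]
  have hm'sub : m' - Finsupp.single (k, a, c) 1 = t := by
    ext x
    rw [Finsupp.tsub_apply, hm'def, Finsupp.add_apply]
    omega
  have htab : t (k, a, b) = 0 := by
    rw [htdef, Finsupp.tsub_apply, Finsupp.single_apply, if_pos rfl, hmab]
  have htm : t + Finsupp.single (k, a, b) 1 = m := by
    rw [htdef]
    exact tsub_add_cancel_of_le (Finsupp.single_le_iff.2 (le_of_eq hmab.symm))
  have hzero : ∀ s : Fin d × Fin w × Fin w, m' s = 0 →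
      ∀ g : MvPolynomial (Fin d × Fin w × Fin w) F,
        MvPolynomial.coeff m' (MvPolynomial.X s * g) = 0 := by
    intro s hs g
    rw [MvPolynomial.coeff_X_mul', if_neg (by simp [Finsupp.mem_support_iff, hs])]
  have h0 := hB k (fun x y => if x = c ∧ y = b then (1 : F) else 0)
  simp only [lieAlg, Set.mem_setOf_eq] at h0
  have h1 := congrArg (MvPolynomial.coeff m') h0
  simp only [MvPolynomial.coeff_sum, MvPolynomial.coeff_smul, smul_eq_mul,
    MvPolynomial.coeff_zero] at h1
  have key : ∑ u : Fin d × Fin w × Fin w, ∑ v : Fin d × Fin w × Fin w,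
      Bmat F w d k (fun x y => if x = c ∧ y = b then (1 : F) else 0) u v *
        MvPolynomial.coeff m' (MvPolynomial.X v * MvPolynomial.pderiv u f)
      = MvPolynomial.coeff m f := by
    refine (Finset.sum_eq_single_of_mem ((k, a, b) : Fin d × Fin w × Fin w)
      (Finset.mem_univ _) ?_).trans ?_
    · rintro ⟨u1, u2, u3⟩ - hu
      apply Finset.sum_eq_zero
      rintro ⟨v1, v2, v3⟩ -
      simp only [Bmat]
      by_cases hc1 : u1 = k ∧ v1 = k
      · rw [if_pos hc1]
        by_cases hc2 : u2 = v2
        · rw [if_pos hc2]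
          by_cases hc3 : v3 = c ∧ u3 = b
          · rw [if_pos hc3, one_mul]
            have hu2 : u2 ≠ a := by
              intro h
              exact hu (by rw [Prod.mk.injEq, Prod.mk.injEq]; exact ⟨hc1.1, h, hc3.2⟩)
            have hv0 : m' (v1, v2, v3) = 0 := by
              rw [hc1.2, ← hc2, hc3.1]
              exact hz1 u2 hu2
            exact hzero _ hv0 _
          · rw [if_neg hc3, zero_mul]
        · rw [if_neg hc2, zero_mul]
      · rw [if_neg hc1]
        by_cases hc4 : u1 = k + 1 ∧ v1 = k + 1
        · rw [if_pos hc4]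
          by_cases hc5 : u3 = v3
          · rw [if_pos hc5]
            by_cases hc6 : u2 = c ∧ v2 = b
            · rw [if_pos hc6]
              have hv0 : m' (v1, v2, v3) = 0 := by
                rw [hc4.2, hc6.2]
                exact hz2 v3
              rw [hzero _ hv0 _, mul_zero]
            · rw [if_neg hc6, neg_zero, zero_mul]
          · rw [if_neg hc5, zero_mul]
        · rw [if_neg hc4, zero_mul]
    · refine (Finset.sum_eq_single_of_mem ((k, a, c) : Fin d × Fin w × Fin w)
        (Finset.mem_univ _) ?_).trans ?_
      · rintro ⟨v1, v2, v3⟩ - hv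
        simp only [Bmat, true_and, and_true, eq_self_iff_true, if_true]
        by_cases hc1 : v1 = k
        · rw [if_pos hc1]
          by_cases hc2 : a = v2
          · rw [if_pos hc2]
            by_cases hc3 : v3 = c
            · exact absurd (by rw [Prod.mk.injEq, Prod.mk.injEq]; exact ⟨hc1, hc2.symm, hc3⟩) hv
            · rw [if_neg hc3, zero_mul]
          · rw [if_neg hc2, zero_mul]
        · rw [if_neg hc1, if_neg (fun hh : k = k + 1 ∧ v1 = k + 1 => hkk1 hh.1), zero_mul]
      · simp only [Bmat, true_and, and_true, eq_self_iff_true, if_true, and_self, one_mul]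
        rw [MvPolynomial.coeff_X_mul',
          if_pos (by simp [Finsupp.mem_support_iff, hm'ac]),
          hm'sub, coeff_pderiv', htab, htm]
        simp
  exact key.symm.trans h1
end

section
/- Suppose tr(Q_0 Q_1 ⋯ Q_{d-1}) = tr(C_0 Q_0 D_0 · C_1 Q_1 D_1 ⋯ C_{d-1} Q_{d-1} D_{d-1}) holds identically, where the Q_k are w×w matrices of distinct indeterminates in disjoint variable sets and C_k, D_k ∈ GL(w, F). Then there exist nonzero scalars α_0,...,α_{d-1} ∈ F with D_{d-1}·C_0 = α_0·I_w, D_k·C_{k+1} = α_{k+1}·I_w for 0 ≤ k ≤ d−2, and ∏_{k=0}^{d-1} α_k = 1. -/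
open Matrix MvPolynomial

section Aux

variable {F : Type*} [CommRing F] {m : Type*} [Fintype m] [DecidableEq m]

private lemma vmv_mul_vmv (u v u' v' : m → F) :
    vecMulVec u v * vecMulVec u' v' = (v ⬝ᵥ u') • vecMulVec u v' := by
  ext i j
  simp only [mul_apply, vecMulVec_apply, Matrix.smul_apply, dotProduct, smul_eq_mul,
    Finset.sum_mul]
  exact Finset.sum_congr rfl fun k _ => by ring

private lemma mul_vmv (A : Matrix m m F) (u v : m → F) :
    A * vecMulVec u v = vecMulVec (A *ᵥ u) v := by
  ext i j
  simp only [mul_apply, vecMulVec_apply, mulVec, dotProduct, Finset.sum_mul]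
  exact Finset.sum_congr rfl fun k _ => by ring

private lemma vmv_mul (A : Matrix m m F) (u v : m → F) :
    vecMulVec u v * A = vecMulVec u (v ᵥ* A) := by
  ext i j
  simp only [mul_apply, vecMulVec_apply, vecMul, dotProduct, Finset.mul_sum]
  exact Finset.sum_congr rfl fun k _ => by ring

private lemma trace_vmv (u v : m → F) : trace (vecMulVec u v) = v ⬝ᵥ u := by
  simp only [trace, diag, vecMulVec_apply, dotProduct]
  exact Finset.sum_congr rfl fun k _ => by ring

/-- threaded cyclic product -/
private def cyc (a : m → F) : (m → F) → List ((m → F) × (m → F)) → F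
  | v, [] => v ⬝ᵥ a
  | v, p :: l => (v ⬝ᵥ p.1) * cyc a p.2 l

private lemma trace_cyc (a : m → F) (v : m → F) (l : List ((m → F) × (m → F))) :
    trace ((vecMulVec a v :: l.map fun p => vecMulVec p.1 p.2).prod) = cyc a v l := by
  induction l generalizing v with
  | nil => simp [cyc, trace_vmv]; exact dotProduct_comm _ _
  | cons p l ih =>
    rw [List.map_cons, List.prod_cons, List.prod_cons, ← mul_assoc, vmv_mul_vmv,
      smul_mul_assoc, trace_smul, cyc, smul_eq_mul]
    rw [← ih p.2, List.prod_cons]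

private lemma cyc_finRange (n : ℕ) (a : m → F) (u v : Fin (n + 1) → m → F) :
    cyc a (v 0) ((List.finRange n).map fun j : Fin n => (u j.succ, v j.succ))
      = (∏ k : Fin n, v k.castSucc ⬝ᵥ u k.succ) * (v (Fin.last n) ⬝ᵥ a) := by
  induction n with
  | zero => simp [cyc]
  | succ n ih =>
    rw [List.finRange_succ, List.map_cons, List.map_map]
    show cyc a (v 0) ((u (0:Fin (n+1)).succ, v (0:Fin (n+1)).succ) :: _) = _
    rw [cyc]
    have := ih (fun k => u k.succ) (fun k => v k.succ)
    rw [show ((List.finRange n).map ((fun j : Fin (n+1) => (u j.succ, v j.succ)) ∘ Fin.succ))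
        = (List.finRange n).map fun j : Fin n => ((fun k : Fin (n+1) => u k.succ) j.succ,
            (fun k : Fin (n+1) => v k.succ) j.succ) from rfl, this]
    simp only [Fin.prod_univ_succ, Fin.succ_castSucc, Fin.succ_last, Fin.castSucc_zero,
      mul_assoc]

private lemma trace_prod_vmv (n : ℕ) (u v : Fin (n + 1) → m → F) :
    trace (((List.finRange (n + 1)).map fun k => vecMulVec (u k) (v k)).prod)
      = ∏ k : Fin (n + 1), v k ⬝ᵥ u (k + 1) := by
  rw [List.finRange_succ, List.map_cons, List.map_map]
  rw [show ((List.finRange n).map ((fun k : Fin (n+1) => vecMulVec (u k) (v k)) ∘ Fin.succ))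
      = ((List.finRange n).map fun j : Fin n => (u j.succ, v j.succ)).map
          (fun p => vecMulVec p.1 p.2) by
        rw [List.map_map]; exact List.map_congr_left fun j _ => rfl]
  rw [trace_cyc, cyc_finRange, Fin.prod_univ_castSucc]
  congr 1
  · exact Finset.prod_congr rfl fun k _ => by rw [Fin.coeSucc_eq_succ]
  · rw [Fin.last_add_one]

private lemma trace_map {S : Type*} [CommRing S] (f : F →+* S) (A : Matrix m m F) :
    trace (A.map f) = f (trace A) := by
  simp [trace, diag, map_sum, Matrix.map_apply]

end Aux

set_option maxHeartbeats 1000000 in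
theorem stmt19 (F : Type*) [Field F] (w d : ℕ) (hw : 2 ≤ w) (hd : 3 ≤ d)
    (Q : Fin d → Matrix (Fin w) (Fin w) (MvPolynomial (Fin d × Fin w × Fin w) F))
    (hQ : ∀ k i j, Q k i j = MvPolynomial.X (k, i, j))
    (C D : Fin d → Matrix (Fin w) (Fin w) F)
    (hC : ∀ k, IsUnit (C k)) (hD : ∀ k, IsUnit (D k))
    (htr : Matrix.trace (((List.finRange d).map Q).prod) =
        Matrix.trace (((List.finRange d).map (fun k =>
          (C k).map MvPolynomial.C * Q k * (D k).map MvPolynomial.C)).prod)) :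
    ∃ α : Fin d → F, (∀ k, α k ≠ 0) ∧
      D ⟨d - 1, by omega⟩ * C ⟨0, by omega⟩ =
        α ⟨0, by omega⟩ • (1 : Matrix (Fin w) (Fin w) F) ∧
      (∀ (k : ℕ) (hk : k ≤ d - 2),
        D ⟨k, by omega⟩ * C ⟨k + 1, by omega⟩ =
          α ⟨k + 1, by omega⟩ • (1 : Matrix (Fin w) (Fin w) F)) ∧
      ∏ k, α k = 1 := by
  haveI : NeZero d := ⟨by omega⟩
  -- Step 1: evaluate the polynomial identity at arbitrary scalar matrices
  have key : ∀ M : Fin d → Matrix (Fin w) (Fin w) F,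
      trace (((List.finRange d).map M).prod)
        = trace (((List.finRange d).map fun k => C k * M k * D k).prod) := by
    intro M
    set φ : MvPolynomial (Fin d × Fin w × Fin w) F →+* F :=
      (MvPolynomial.eval fun p : Fin d × Fin w × Fin w => M p.1 p.2.1 p.2.2) with hφ
    have h1 := congrArg φ htr
    have hmap : ∀ (l : List (Matrix (Fin w) (Fin w)
        (MvPolynomial (Fin d × Fin w × Fin w) F))),
        φ (trace l.prod) = trace ((l.map fun A => A.map φ)).prod := by
      intro l
      rw [← trace_map φ]
      congr 1
      rw [show (fun A : Matrix (Fin w) (Fin w) (MvPolynomial (Fin d × Fin w × Fin w) F)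
          => A.map φ) = fun A => φ.mapMatrix A from rfl]
      rw [← map_list_prod φ.mapMatrix l]
      rfl
    rw [hmap, hmap, List.map_map, List.map_map] at h1
    have e1 : ((fun A : Matrix (Fin w) (Fin w) (MvPolynomial (Fin d × Fin w × Fin w) F)
        => A.map φ) ∘ Q) = M := by
      funext k
      ext i j
      simp [Matrix.map_apply, hQ, hφ]
    have e2 : ((fun A : Matrix (Fin w) (Fin w) (MvPolynomial (Fin d × Fin w × Fin w) F)
        => A.map φ) ∘ fun k => (C k).map MvPolynomial.C * Q k * (D k).map MvPolynomial.C)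
        = fun k => C k * M k * D k := by
      funext k
      show ((C k).map MvPolynomial.C * Q k * (D k).map MvPolynomial.C).map φ = _
      rw [Matrix.map_mul, Matrix.map_mul]
      congr 1
      · congr 1
        · ext i j; simp [Matrix.map_apply, hφ]
        · ext i j; simp [Matrix.map_apply, hQ, hφ]
      · ext i j; simp [Matrix.map_apply, hφ]
    rw [e1, e2] at h1
    exact h1
  obtain ⟨e, rfl⟩ : ∃ e, d = e + 1 := ⟨d - 1, by omega⟩
  obtain ⟨G, hGdef⟩ : ∃ G : Fin (e+1) → Matrix (Fin w) (Fin w) F,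
      ∀ k, G k = D k * C (k + 1) := ⟨_, fun _ => rfl⟩
  -- Step 2: the coefficient identity
  have star : ∀ s t : Fin (e+1) → Fin w,
      (∏ k, if t k = s k then (1:F) else 0) = ∏ k, G k (t k) (s k) := by
    intro s t
    have h := key (fun k => vecMulVec (Pi.single (s (k - 1)) (1:F)) (Pi.single (t k) 1))
    rw [trace_prod_vmv] at h
    have h2 : (List.finRange (e+1)).map (fun k => C k *
        vecMulVec (Pi.single (s (k-1)) (1:F)) (Pi.single (t k) 1) * D k)
        = (List.finRange (e+1)).map (fun k =>
            vecMulVec (C k *ᵥ Pi.single (s (k-1)) 1) (Pi.single (t k) 1 ᵥ* D k)) :=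
      List.map_congr_left fun k _ => by rw [mul_vmv, vmv_mul]
    rw [h2, trace_prod_vmv] at h
    have hl : ∀ k : Fin (e+1), (Pi.single (t k) (1:F)) ⬝ᵥ (Pi.single (s (k + 1 - 1)) 1)
        = if t k = s k then (1:F) else 0 := by
      intro k
      rw [add_sub_cancel_right, dotProduct_single, mul_one, Pi.single_apply]
      exact if_congr eq_comm rfl rfl
    have hr : ∀ k : Fin (e+1),
        ((Pi.single (t k) (1:F)) ᵥ* D k) ⬝ᵥ (C (k+1) *ᵥ Pi.single (s (k+1-1)) 1)
          = G k (t k) (s k) := by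
      intro k
      rw [add_sub_cancel_right, single_vecMul, mulVec_single, hGdef, mul_apply]
      simp [dotProduct]
    rw [Finset.prod_congr rfl fun k _ => hl k, Finset.prod_congr rfl fun k _ => hr k] at h
    exact h
  -- Step 3: combinatorics
  have diag : ∀ c : Fin (e+1) → Fin w, ∏ k, G k (c k) (c k) = 1 := by
    intro c
    have := star c c
    simpa using this.symm
  have split : ∀ (m : Fin (e+1)) (c : Fin (e+1) → Fin w),
      G m (c m) (c m) * ∏ k ∈ Finset.univ.erase m, G k (c k) (c k) = 1 := by
    intro m c
    rw [Finset.mul_prod_erase Finset.univ (fun k => G k (c k) (c k)) (Finset.mem_univ m)]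
    exact diag c
  have erase_ne : ∀ (m : Fin (e+1)) (c : Fin (e+1) → Fin w),
      (∏ k ∈ Finset.univ.erase m, G k (c k) (c k)) ≠ 0 := by
    intro m c h0
    have := split m c
    rw [h0, mul_zero] at this
    exact zero_ne_one this
  have off : ∀ (m : Fin (e+1)) (x y : Fin w), x ≠ y → G m x y = 0 := by
    intro m x y hxy
    have h := star (Function.update (fun _ => x) m y) (fun _ => x)
    have hL : (∏ k, if (fun _ : Fin (e+1) => x) k
        = Function.update (fun _ => x) m y k then (1:F) else 0) = 0 := by
      apply Finset.prod_eq_zero (Finset.mem_univ m)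
      simp [Function.update_self, hxy]
    have hR : (∏ k, G k ((fun _ : Fin (e+1) => x) k) (Function.update (fun _ => x) m y k))
        = G m x y * ∏ k ∈ Finset.univ.erase m, G k x x := by
      rw [← Finset.mul_prod_erase Finset.univ
        (fun k => G k ((fun _ : Fin (e+1) => x) k) (Function.update (fun _ => x) m y k))
        (Finset.mem_univ m)]
      congr 1
      · simp
      · exact Finset.prod_congr rfl fun k hk => by
          rw [Function.update_of_ne (Finset.ne_of_mem_erase hk)]
    rw [hL, hR] at h
    rcases mul_eq_zero.mp h.symm with h' | h'
    · exact h'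
    · exact absurd h' (erase_ne m fun _ => x)
  have diagconst : ∀ (m : Fin (e+1)) (x y : Fin w), G m x x = G m y y := by
    intro m x y
    have h1 := split m (fun _ => x)
    have h2 := split m (Function.update (fun _ => x) m y)
    rw [Function.update_self] at h2
    have h3 : (∏ k ∈ Finset.univ.erase m, G k (Function.update (fun _ => x) m y k)
        (Function.update (fun _ => x) m y k)) = ∏ k ∈ Finset.univ.erase m, G k x x :=
      Finset.prod_congr rfl fun k hk => by
        rw [Function.update_of_ne (Finset.ne_of_mem_erase hk)]
    rw [h3] at h2
    have := h1.trans h2.symm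
    exact mul_right_cancel₀ (erase_ne m fun _ => x) this
  have hz : (0 : ℕ) < w := by omega
  obtain ⟨z⟩ : Nonempty (Fin w) := ⟨⟨0, hz⟩⟩
  obtain ⟨β, hβdef⟩ : ∃ β : Fin (e+1) → F, ∀ m, β m = G m z z := ⟨_, fun _ => rfl⟩
  have hβne : ∀ m, β m ≠ 0 := by
    intro m h0
    have := split m (fun _ => z)
    rw [← hβdef, h0, zero_mul] at this
    exact zero_ne_one this
  have hGscal : ∀ m, G m = β m • (1 : Matrix (Fin w) (Fin w) F) := by
    intro m
    ext i j
    rw [Matrix.smul_apply, one_apply]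
    by_cases hij : i = j
    · subst hij
      rw [if_pos rfl, smul_eq_mul, mul_one, hβdef]
      exact diagconst m i z
    · rw [if_neg hij, smul_zero]
      exact off m i j hij
  have hprodβ : ∏ m, β m = 1 := by
    rw [Finset.prod_congr rfl fun m _ => hβdef m]
    exact diag fun _ => z
  refine ⟨fun j => β (j - 1), fun k => hβne _, ?_, ?_, ?_⟩
  · beta_reduce
    have key2 : ((⟨0, by omega⟩ : Fin (e+1))) - 1 = ⟨e + 1 - 1, by omega⟩ := by
      apply Fin.ext
      simp [Fin.sub_def]
    have key1 : (⟨0, by omega⟩ : Fin (e+1)) = ⟨e + 1 - 1, by omega⟩ + 1 := by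
      apply Fin.ext
      simp [Fin.add_def]
    rw [key2, key1, ← hGdef]
    exact hGscal _
  · intro k hk
    beta_reduce
    have hone : (1 : Fin (e+1)).val = 1 := by
      rw [Fin.val_one']
      exact Nat.mod_eq_of_lt (by omega)
    have key2 : ((⟨k + 1, by omega⟩ : Fin (e+1)) - 1) = ⟨k, by omega⟩ := by
      apply Fin.ext
      rw [Fin.sub_def]
      show (e + 1 - (1 : Fin (e+1)).val + (k + 1)) % (e + 1) = k
      rw [hone, show e + 1 - 1 + (k + 1) = k + (e + 1) by omega, Nat.add_mod_right]
      exact Nat.mod_eq_of_lt (by omega)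
    have key1 : (⟨k + 1, by omega⟩ : Fin (e+1)) = ⟨k, by omega⟩ + 1 := by
      apply Fin.ext
      rw [Fin.add_def]
      show k + 1 = (k + (1 : Fin (e+1)).val) % (e + 1)
      rw [hone]
      exact (Nat.mod_eq_of_lt (by omega)).symm
    rw [key2, key1, ← hGdef]
    exact hGscal _
  · exact (Fintype.prod_equiv (Equiv.subRight (1 : Fin (e+1)))
      (fun k => β (k - 1)) β fun j => rfl).trans hprodβ
end
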